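/- arXiv:2107.01741 — 5 statements merged into one kernel-verified Lean document; each statement's English description precedes it below -/
import Mathlib

section
/- Let p ∈ [1, p_*) with p_* := N/(N−4β). The function t ↦ ‖Y(·,t)‖_{L^p(ℝ^N)} is integrable on (0,T) for some (equivalently every) T > 0 if and only if p < p_c := N/(N−2β). -/
open MeasureTheory Real Set Filter
open scoped ENNReal Pointwise

open Metric Module in
private lemma aux_ball_lintegral {E : Type*} [NormedAddCommGroup E] [NormedSpace ℝ E]
    [MeasurableSpace E] [BorelSpace E] [FiniteDimensional ℝ E]
    (μ : Measure E) [μ.IsAddHaarMeasure] {s : ℝ}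
    (hs : -(finrank ℝ E : ℝ) < s) (hneg : s < 0) :
    ∫⁻ x in Metric.ball 0 1, ENNReal.ofReal (‖x‖ ^ s) ∂μ < ∞ := by
  set n := finrank ℝ E with hn
  set B := μ (Metric.ball (0 : E) 1) with hB
  have hBtop : B < ∞ := measure_ball_lt_top
  set u : ℝ := (1/2 : ℝ) ^ s with hu
  have hu0 : 0 < u := Real.rpow_pos_of_pos (by norm_num) _
  set w : ℝ := u * (1/2 : ℝ) ^ n with hw
  have hw0 : 0 < w := mul_pos hu0 (by positivity)
  have hw1 : w < 1 := by
    have : w = (1/2 : ℝ) ^ (s + n) := by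
      rw [hw, hu, Real.rpow_add (by norm_num : (0:ℝ) < 1/2), Real.rpow_natCast]
    rw [this]
    exact Real.rpow_lt_one (by norm_num) (by norm_num) (by linarith)
  set A : ℕ → Set E := fun k =>
    Metric.closedBall 0 ((1/2 : ℝ) ^ k) \ Metric.ball 0 ((1/2 : ℝ) ^ (k+1)) with hA
  have hcover : Metric.ball (0 : E) 1 ⊆ {0} ∪ ⋃ k, A k := by
    intro x hx
    rcases eq_or_ne x 0 with rfl | hx0
    · exact Or.inl rfl
    right
    have hxn : 0 < ‖x‖ := norm_pos_iff.2 hx0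
    have hx1 : ‖x‖ < 1 := mem_ball_zero_iff.1 hx
    have hex : ∃ m : ℕ, (1/2 : ℝ) ^ m < ‖x‖ := exists_pow_lt_of_lt_one hxn (by norm_num)
    obtain ⟨k, hk⟩ : ∃ k, Nat.find hex = k + 1 := by
      refine Nat.exists_eq_succ_of_ne_zero ?_
      intro h0
      have := Nat.find_spec hex
      rw [h0] at this
      simp at this
      linarith
    refine mem_iUnion.2 ⟨k, ?_, ?_⟩
    · have := Nat.find_min hex (by omega : k < Nat.find hex)
      push_neg at this
      exact mem_closedBall_zero_iff.2 this
    · have := Nat.find_spec hex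
      rw [hk] at this
      simp only [A, mem_diff, Metric.mem_ball, not_lt]
      rw [dist_zero_right]
      linarith
  calc ∫⁻ x in Metric.ball 0 1, ENNReal.ofReal (‖x‖ ^ s) ∂μ
      ≤ ∫⁻ x in {0} ∪ ⋃ k, A k, ENNReal.ofReal (‖x‖ ^ s) ∂μ := lintegral_mono_set hcover
    _ ≤ (∫⁻ x in ({0} : Set E), ENNReal.ofReal (‖x‖ ^ s) ∂μ)
        + ∫⁻ x in ⋃ k, A k, ENNReal.ofReal (‖x‖ ^ s) ∂μ := lintegral_union_le _ _ _
    _ = ∫⁻ x in ⋃ k, A k, ENNReal.ofReal (‖x‖ ^ s) ∂μ := by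
        rw [lintegral_singleton]
        simp [Real.zero_rpow hneg.ne]
    _ ≤ ∑' k, ∫⁻ x in A k, ENNReal.ofReal (‖x‖ ^ s) ∂μ := lintegral_iUnion_le _ _
    _ ≤ ∑' k : ℕ, (ENNReal.ofReal u * B) * (ENNReal.ofReal w) ^ k := by
        refine ENNReal.tsum_le_tsum fun k => ?_
        have hAk : MeasurableSet (A k) := measurableSet_closedBall.diff measurableSet_ball
        have step1 : ∫⁻ x in A k, ENNReal.ofReal (‖x‖ ^ s) ∂μ
            ≤ ∫⁻ _ in A k, ENNReal.ofReal (((1/2:ℝ) ^ (k+1)) ^ s) ∂μ := by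
          refine setLIntegral_mono' hAk fun x hx => ?_
          refine ENNReal.ofReal_le_ofReal ?_
          refine Real.rpow_le_rpow_of_nonpos (by positivity) ?_ hneg.le
          have := hx.2
          rw [Metric.mem_ball, dist_zero_right, not_lt] at this
          exact this
        have step2 : μ (A k) ≤ ENNReal.ofReal (((1/2:ℝ) ^ k) ^ n) * B := by
          rw [hB, ← μ.addHaar_closedBall (0 : E) (by positivity : (0:ℝ) ≤ (1/2:ℝ)^k)]
          exact measure_mono diff_subset
        calc ∫⁻ x in A k, ENNReal.ofReal (‖x‖ ^ s) ∂μ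
            ≤ ENNReal.ofReal (((1/2:ℝ) ^ (k+1)) ^ s) * μ (A k) := by
              refine le_trans step1 ?_
              rw [setLIntegral_const]
          _ ≤ ENNReal.ofReal (((1/2:ℝ) ^ (k+1)) ^ s)
              * (ENNReal.ofReal (((1/2:ℝ) ^ k) ^ n) * B) := by
              exact mul_le_mul_right step2 _
          _ = (ENNReal.ofReal u * B) * (ENNReal.ofReal w) ^ k := by
              rw [← mul_assoc, ← ENNReal.ofReal_mul (by positivity)]
              have hpow : ((1/2:ℝ) ^ (k+1)) ^ s = u ^ (k+1) := by
                rw [hu, ← Real.rpow_natCast ((1/2:ℝ)) (k+1), ← Real.rpow_mul (by norm_num),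
                  mul_comm, Real.rpow_mul (by norm_num), Real.rpow_natCast]
              have key : ((1/2:ℝ) ^ (k+1)) ^ s * ((1/2:ℝ) ^ k) ^ n = u * w ^ k := by
                rw [hpow, hw]; ring
              rw [key, ENNReal.ofReal_mul hu0.le, ENNReal.ofReal_pow hw0.le]
              ring
    _ = (ENNReal.ofReal u * B) * ∑' k : ℕ, (ENNReal.ofReal w) ^ k := ENNReal.tsum_mul_left
    _ < ∞ := by
        rw [ENNReal.tsum_geometric]
        refine ENNReal.mul_lt_top (ENNReal.mul_lt_top ENNReal.ofReal_lt_top hBtop) ?_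
        rw [ENNReal.inv_lt_top]
        exact tsub_pos_of_lt (ENNReal.ofReal_lt_one.2 hw1)

open Metric Module in
private lemma aux_compl_lintegral {E : Type*} [NormedAddCommGroup E] [NormedSpace ℝ E]
    [MeasurableSpace E] [BorelSpace E] [FiniteDimensional ℝ E]
    (μ : Measure E) [μ.IsAddHaarMeasure] {r : ℝ}
    (hr : (finrank ℝ E : ℝ) < r) :
    ∫⁻ x in (Metric.ball (0:E) 1)ᶜ, ENNReal.ofReal (‖x‖ ^ (-r)) ∂μ < ∞ := by
  have h2r : (2:ℝ) ^ r * (2:ℝ) ^ (-r) = 1 := by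
    rw [← Real.rpow_add (by norm_num : (0:ℝ) < 2)]
    simp
  calc ∫⁻ x in (Metric.ball (0:E) 1)ᶜ, ENNReal.ofReal (‖x‖ ^ (-r)) ∂μ
      ≤ ∫⁻ x in (Metric.ball (0:E) 1)ᶜ,
          ENNReal.ofReal ((2:ℝ)^r) * ENNReal.ofReal ((1 + ‖x‖) ^ (-r)) ∂μ := by
        refine setLIntegral_mono' measurableSet_ball.compl fun x hx => ?_
        have hx1 : (1:ℝ) ≤ ‖x‖ := by
          simpa [Metric.mem_ball, dist_zero_right, not_lt] using hx
        rw [← ENNReal.ofReal_mul (by positivity)]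
        refine ENNReal.ofReal_le_ofReal ?_
        have h1 : (1 + ‖x‖) ≤ 2 * ‖x‖ := by linarith
        have h2 : (2 * ‖x‖) ^ (-r) ≤ (1 + ‖x‖) ^ (-r) :=
          Real.rpow_le_rpow_of_nonpos (by positivity) h1 (by linarith [(Nat.cast_nonneg (finrank ℝ E) : (0:ℝ) ≤ _)] : -r ≤ 0)
        have h3 : (2 * ‖x‖) ^ (-r) = (2:ℝ)^(-r) * ‖x‖ ^ (-r) :=
          Real.mul_rpow (by norm_num) (by positivity)
        calc ‖x‖ ^ (-r) = (2:ℝ)^r * ((2:ℝ)^(-r) * ‖x‖ ^ (-r)) := by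
              rw [← mul_assoc, h2r, one_mul]
          _ = (2:ℝ)^r * (2 * ‖x‖) ^ (-r) := by rw [h3]
          _ ≤ (2:ℝ)^r * (1 + ‖x‖) ^ (-r) := by
              exact mul_le_mul_of_nonneg_left h2 (by positivity)
    _ = ENNReal.ofReal ((2:ℝ)^r) * ∫⁻ x in (Metric.ball (0:E) 1)ᶜ,
          ENNReal.ofReal ((1 + ‖x‖) ^ (-r)) ∂μ :=
        lintegral_const_mul' _ _ ENNReal.ofReal_ne_top
    _ ≤ ENNReal.ofReal ((2:ℝ)^r) * ∫⁻ x, ENNReal.ofReal ((1 + ‖x‖) ^ (-r)) ∂μ := by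
        exact mul_le_mul_right (setLIntegral_le_lintegral _ _) _
    _ < ∞ := ENNReal.mul_lt_top ENNReal.ofReal_lt_top (finite_integral_one_add_norm hr)


set_option maxHeartbeats 1000000 in
open Metric Module in
theorem Y_Lp_time_integrability
    (N : ℕ) (α β : ℝ)
    (hα : 0 < α ∧ α < 1) (hβ : 0 < β ∧ β ≤ 1) (hN : 4 * β < (N : ℝ))
    (G : EuclideanSpace ℝ (Fin N) → ℝ)
    (hGmeas : Measurable G) (hGnonneg : ∀ ξ, 0 ≤ G ξ)
    (c₁ c₂ : ℝ) (hc₁ : 0 < c₁) (hc₂ : 0 < c₂)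
    (hGin : ∀ ξ : EuclideanSpace ℝ (Fin N), 0 < ‖ξ‖ → ‖ξ‖ ≤ 1 →
      c₁ * ‖ξ‖ ^ (4 * β - (N : ℝ)) ≤ G ξ ∧ G ξ ≤ c₂ * ‖ξ‖ ^ (4 * β - (N : ℝ)))
    (hGout : ∀ ξ : EuclideanSpace ℝ (Fin N), 1 ≤ ‖ξ‖ →
      c₁ * ‖ξ‖ ^ (-((N : ℝ) + 2 * β)) ≤ G ξ ∧ G ξ ≤ c₂ * ‖ξ‖ ^ (-((N : ℝ) + 2 * β)))
    (Y : EuclideanSpace ℝ (Fin N) → ℝ → ℝ)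
    (hY : ∀ x t, Y x t = t ^ (α - 1 - α * (N : ℝ) / (2 * β)) * G ((t ^ (-(α / (2 * β)))) • x))
    (p : ℝ) (hp1 : 1 ≤ p) (hpstar : p < (N : ℝ) / ((N : ℝ) - 4 * β)) :
    ∀ T : ℝ, 0 < T →
      ((∫⁻ t in Set.Ioc (0:ℝ) T, eLpNorm (fun x => Y x t) (ENNReal.ofReal p) volume) < ∞ ↔
        p < (N : ℝ) / ((N : ℝ) - 2 * β)) := by
  intro T hT
  have hβ0 : 0 < β := hβ.1
  have hα0 : 0 < α := hα.1
  have hp0 : (0:ℝ) < p := lt_of_lt_of_le one_pos hp1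
  have hN0 : (0:ℝ) < N := by linarith
  have hNnat : 0 < N := by exact_mod_cast hN0
  haveI : Nonempty (Fin N) := ⟨⟨0, hNnat⟩⟩
  haveI : Nontrivial (EuclideanSpace ℝ (Fin N)) := by
    have : Nontrivial (∀ _ : Fin N, ℝ) := inferInstance
    infer_instance
  have hrankE : (finrank ℝ (EuclideanSpace ℝ (Fin N)) : ℝ) = N := by
    rw [finrank_euclideanSpace_fin]
  have hN4 : 0 < (N:ℝ) - 4*β := by linarith
  have hN2 : 0 < (N:ℝ) - 2*β := by linarith
  set q : ℝ≥0∞ := ENNReal.ofReal p with hq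
  have hq0 : q ≠ 0 := by
    simp [hq, ENNReal.ofReal_eq_zero, not_le, hp0]
  have hqtop : q ≠ ∞ := ENNReal.ofReal_ne_top
  have hqreal : q.toReal = p := ENNReal.toReal_ofReal hp0.le
  set I := ∫⁻ x : EuclideanSpace ℝ (Fin N), (‖G x‖₊ : ℝ≥0∞) ^ p ∂volume with hI
  set K := eLpNorm G q volume with hK
  have hGp_meas : Measurable fun x : EuclideanSpace ℝ (Fin N) => (‖G x‖₊ : ℝ≥0∞) ^ p :=
    hGmeas.nnnorm.coe_nnreal_ennreal.pow measurable_const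
  have hKI : K = I ^ (1/p) := by
    rw [hK, eLpNorm_eq_lintegral_rpow_enorm_toReal hq0 hqtop, hqreal, hI]; simp only [enorm_eq_nnnorm]
  -- finiteness of I
  have hIfin : I < ∞ := by
    have hsplit : I = (∫⁻ x in Metric.ball (0:EuclideanSpace ℝ (Fin N)) 1, (‖G x‖₊ : ℝ≥0∞) ^ p ∂volume)
        + ∫⁻ x in (Metric.ball (0:EuclideanSpace ℝ (Fin N)) 1)ᶜ, (‖G x‖₊ : ℝ≥0∞) ^ p ∂volume := by
      rw [hI, ← lintegral_add_compl _ measurableSet_ball]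
    rw [hsplit]
    refine ENNReal.add_lt_top.2 ⟨?_, ?_⟩
    · -- ball part
      have hball : (∫⁻ x in Metric.ball (0:EuclideanSpace ℝ (Fin N)) 1, (‖G x‖₊ : ℝ≥0∞) ^ p ∂volume)
          ≤ ∫⁻ x in Metric.ball (0:EuclideanSpace ℝ (Fin N)) 1,
              ENNReal.ofReal (c₂ ^ p) * ENNReal.ofReal (‖x‖ ^ ((4*β - (N:ℝ)) * p)) ∂volume := by
        refine lintegral_mono_ae ?_
        have hae : ∀ᵐ x : EuclideanSpace ℝ (Fin N) ∂(volume.restrict (Metric.ball (0:EuclideanSpace ℝ (Fin N)) 1)), x ≠ 0 := by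
          refine ae_restrict_of_ae ?_
          have h0 : volume ({(0:EuclideanSpace ℝ (Fin N))} : Set (EuclideanSpace ℝ (Fin N))) = 0 := measure_singleton _
          rw [ae_iff]
          simpa using h0
        filter_upwards [hae, ae_restrict_mem measurableSet_ball] with x hx0 hxball
        have hxn : 0 < ‖x‖ := norm_pos_iff.2 hx0
        have hx1 : ‖x‖ ≤ 1 := (mem_ball_zero_iff.1 hxball).le
        have hGx := (hGin x hxn hx1).2
        calc (‖G x‖₊ : ℝ≥0∞) ^ p = (ENNReal.ofReal (G x)) ^ p := by
              rw [← Real.enorm_eq_ofReal (hGnonneg x), enorm_eq_nnnorm]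
          _ ≤ (ENNReal.ofReal (c₂ * ‖x‖ ^ (4*β - (N:ℝ)))) ^ p :=
              ENNReal.rpow_le_rpow (ENNReal.ofReal_le_ofReal hGx) hp0.le
          _ = ENNReal.ofReal (c₂ ^ p) * ENNReal.ofReal (‖x‖ ^ ((4*β - (N:ℝ)) * p)) := by
              rw [ENNReal.ofReal_rpow_of_nonneg (by positivity) hp0.le,
                Real.mul_rpow hc₂.le (by positivity), ← Real.rpow_mul (norm_nonneg x),
                ENNReal.ofReal_mul (by positivity)]
      refine lt_of_le_of_lt hball ?_
      rw [lintegral_const_mul' _ _ ENNReal.ofReal_ne_top]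
      refine ENNReal.mul_lt_top ENNReal.ofReal_lt_top ?_
      refine aux_ball_lintegral volume ?_ ?_
      · rw [hrankE]; nlinarith [(lt_div_iff₀ hN4).1 hpstar]
      · nlinarith
    · -- outside part
      have hcompl : (∫⁻ x in (Metric.ball (0:EuclideanSpace ℝ (Fin N)) 1)ᶜ, (‖G x‖₊ : ℝ≥0∞) ^ p ∂volume)
          ≤ ∫⁻ x in (Metric.ball (0:EuclideanSpace ℝ (Fin N)) 1)ᶜ,
              ENNReal.ofReal (c₂ ^ p) * ENNReal.ofReal (‖x‖ ^ (-(((N:ℝ) + 2*β) * p))) ∂volume := by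
        refine setLIntegral_mono' measurableSet_ball.compl fun x hx => ?_
        have hx1 : (1:ℝ) ≤ ‖x‖ := by
          simpa [Metric.mem_ball, dist_zero_right, not_lt] using hx
        have hGx := (hGout x hx1).2
        calc (‖G x‖₊ : ℝ≥0∞) ^ p = (ENNReal.ofReal (G x)) ^ p := by
              rw [← Real.enorm_eq_ofReal (hGnonneg x), enorm_eq_nnnorm]
          _ ≤ (ENNReal.ofReal (c₂ * ‖x‖ ^ (-((N:ℝ) + 2*β)))) ^ p :=
              ENNReal.rpow_le_rpow (ENNReal.ofReal_le_ofReal hGx) hp0.le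
          _ = ENNReal.ofReal (c₂ ^ p) * ENNReal.ofReal (‖x‖ ^ (-(((N:ℝ) + 2*β) * p))) := by
              rw [ENNReal.ofReal_rpow_of_nonneg (by positivity) hp0.le,
                Real.mul_rpow hc₂.le (by positivity), ← Real.rpow_mul (norm_nonneg x),
                ENNReal.ofReal_mul (by positivity), neg_mul]
      refine lt_of_le_of_lt hcompl ?_
      rw [lintegral_const_mul' _ _ ENNReal.ofReal_ne_top]
      refine ENNReal.mul_lt_top ENNReal.ofReal_lt_top ?_
      refine aux_compl_lintegral volume ?_
      rw [hrankE]; nlinarith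
  have hKfin : K < ∞ := by
    rw [hKI]
    exact ENNReal.rpow_lt_top_of_nonneg (by positivity) hIfin.ne
  -- K nonzero
  have hK0 : K ≠ 0 := by
    intro h0
    have hG0 : G =ᵐ[volume] 0 :=
      (eLpNorm_eq_zero_iff hGmeas.aestronglyMeasurable hq0).1 h0
    have hnull : volume {x : EuclideanSpace ℝ (Fin N) | G x ≠ 0} = 0 := by
      rw [EventuallyEq, ae_iff] at hG0
      simpa using hG0
    set S : Set (EuclideanSpace ℝ (Fin N)) := Metric.ball 0 1 \ Metric.ball 0 (1/2) with hS
    have hSsub : S ⊆ {x : EuclideanSpace ℝ (Fin N) | G x ≠ 0} := by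
      intro x hx
      have hx2 : (1/2:ℝ) ≤ ‖x‖ := by
        have := hx.2
        rw [Metric.mem_ball, dist_zero_right, not_lt] at this
        exact this
      have hxn : 0 < ‖x‖ := lt_of_lt_of_le (by norm_num) hx2
      have hx1 : ‖x‖ ≤ 1 := (mem_ball_zero_iff.1 hx.1).le
      have hlow := (hGin x hxn hx1).1
      have : 0 < G x := lt_of_lt_of_le (by positivity) hlow
      exact this.ne'
    have hSnull : volume S = 0 := measure_mono_null hSsub hnull
    have hsub2 : Metric.ball (0:EuclideanSpace ℝ (Fin N)) 1 ⊆ S ∪ Metric.ball 0 (1/2) := by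
      intro x hx
      by_cases h : x ∈ Metric.ball (0:EuclideanSpace ℝ (Fin N)) (1/2)
      · exact Or.inr h
      · exact Or.inl ⟨hx, h⟩
    have hle : volume (Metric.ball (0:EuclideanSpace ℝ (Fin N)) 1) ≤ volume (Metric.ball (0:EuclideanSpace ℝ (Fin N)) (1/2)) := by
      calc volume (Metric.ball (0:EuclideanSpace ℝ (Fin N)) 1) ≤ volume S + volume (Metric.ball (0:EuclideanSpace ℝ (Fin N)) (1/2)) :=
            le_trans (measure_mono hsub2) (measure_union_le _ _)
        _ = volume (Metric.ball (0:EuclideanSpace ℝ (Fin N)) (1/2)) := by rw [hSnull, zero_add]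
    have hballs : volume (Metric.ball (0:EuclideanSpace ℝ (Fin N)) (1/2))
        = ENNReal.ofReal ((1/2:ℝ) ^ finrank ℝ (EuclideanSpace ℝ (Fin N))) * volume (Metric.ball (0:EuclideanSpace ℝ (Fin N)) 1) :=
      Measure.addHaar_ball volume 0 (by norm_num)
    have hlt1 : ENNReal.ofReal ((1/2:ℝ) ^ finrank ℝ (EuclideanSpace ℝ (Fin N))) < 1 := by
      refine ENNReal.ofReal_lt_one.2 ?_
      refine pow_lt_one₀ (by norm_num) (by norm_num) ?_
      have : 0 < finrank ℝ (EuclideanSpace ℝ (Fin N)) := finrank_pos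
      omega
    have hBpos : volume (Metric.ball (0:EuclideanSpace ℝ (Fin N)) 1) ≠ 0 :=
      (measure_ball_pos volume 0 one_pos).ne'
    have hBfin : volume (Metric.ball (0:EuclideanSpace ℝ (Fin N)) 1) ≠ ∞ := measure_ball_lt_top.ne
    have : volume (Metric.ball (0:EuclideanSpace ℝ (Fin N)) 1) < volume (Metric.ball (0:EuclideanSpace ℝ (Fin N)) 1) := by
      calc volume (Metric.ball (0:EuclideanSpace ℝ (Fin N)) 1) ≤ volume (Metric.ball (0:EuclideanSpace ℝ (Fin N)) (1/2)) := hle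
        _ = ENNReal.ofReal ((1/2:ℝ) ^ finrank ℝ (EuclideanSpace ℝ (Fin N))) * volume (Metric.ball (0:EuclideanSpace ℝ (Fin N)) 1) := hballs
        _ < 1 * volume (Metric.ball (0:EuclideanSpace ℝ (Fin N)) 1) :=
            (ENNReal.mul_lt_mul_iff_left hBpos hBfin).2 hlt1
        _ = volume (Metric.ball (0:EuclideanSpace ℝ (Fin N)) 1) := one_mul _
    exact absurd this (lt_irrefl _)
  -- scaling identity
  set e : ℝ := α - 1 - α * (N:ℝ) / (2*β) + α * (N:ℝ) / (2*β*p) with he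
  have hscale : ∀ t ∈ Set.Ioc (0:ℝ) T,
      eLpNorm (fun x => Y x t) q volume = ENNReal.ofReal (t ^ e) * K := by
    intro t ht
    have ht0 : 0 < t := ht.1
    set a : ℝ := α - 1 - α * (N:ℝ) / (2*β) with ha
    set s : ℝ := t ^ (-(α / (2*β))) with hs
    have hs0 : 0 < s := Real.rpow_pos_of_pos ht0 _
    have h1 : (fun x : EuclideanSpace ℝ (Fin N) => Y x t) = (t ^ a) • (fun x : EuclideanSpace ℝ (Fin N) => G (s • x)) := by
      funext x
      simp only [hY, Pi.smul_apply, smul_eq_mul, ha, hs]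
    rw [h1, eLpNorm_const_smul]
    have hmap : (∫⁻ x : EuclideanSpace ℝ (Fin N), (‖G (s • x)‖₊ : ℝ≥0∞) ^ p ∂volume)
        = ENNReal.ofReal |((s:ℝ) ^ finrank ℝ (EuclideanSpace ℝ (Fin N)))⁻¹| * I := by
      have : (∫⁻ x : EuclideanSpace ℝ (Fin N), (‖G (s • x)‖₊ : ℝ≥0∞) ^ p ∂volume)
          = ∫⁻ y : EuclideanSpace ℝ (Fin N), (‖G y‖₊ : ℝ≥0∞) ^ p ∂(Measure.map (s • ·) volume) :=
        (lintegral_map hGp_meas (measurable_const_smul s)).symm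
      rw [this, Measure.map_addHaar_smul volume hs0.ne', lintegral_smul_measure, smul_eq_mul]
    have hdil : eLpNorm (fun x : EuclideanSpace ℝ (Fin N) => G (s • x)) q volume
        = ENNReal.ofReal (s ^ (-((N:ℝ)/p))) * K := by
      rw [eLpNorm_eq_lintegral_rpow_enorm_toReal hq0 hqtop, hqreal]; simp only [enorm_eq_nnnorm]; rw [hmap,
        ENNReal.mul_rpow_of_nonneg _ _ (by positivity), ← hKI]
      congr 1
      have habs : |((s:ℝ) ^ finrank ℝ (EuclideanSpace ℝ (Fin N)))⁻¹| = s ^ (-((N:ℝ))) := by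
        rw [abs_of_pos (by positivity), ← Real.rpow_natCast s (finrank ℝ (EuclideanSpace ℝ (Fin N))),
          ← Real.rpow_neg hs0.le, hrankE]
      rw [habs, ENNReal.ofReal_rpow_of_nonneg (by positivity) (by positivity),
        ← Real.rpow_mul hs0.le]
      congr 1
      field_simp
    rw [hdil]
    have hnorm : ((‖t ^ a‖ₑ : ℝ≥0∞)) = ENNReal.ofReal (t ^ a) :=
      Real.enorm_eq_ofReal (Real.rpow_pos_of_pos ht0 _).le
    have hsp : s ^ (-((N:ℝ)/p)) = t ^ ((-(α/(2*β))) * (-((N:ℝ)/p))) := by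
      rw [hs, ← Real.rpow_mul ht0.le]
    rw [hnorm, ← mul_assoc, ← ENNReal.ofReal_mul (by positivity), hsp,
      ← Real.rpow_add ht0]
    have hexp : a + -(α / (2 * β)) * -((N:ℝ) / p) = e := by
      rw [ha, he, ha]
      field_simp
    rw [hexp]
  have harith : (-1:ℝ) < e ↔ p < (N:ℝ)/((N:ℝ) - 2*β) := by
    have hkey : e + 1 = α * ((N:ℝ) - ((N:ℝ) - 2*β)*p) / (2*β*p) := by
      rw [he]; field_simp; ring
    constructor
    · intro h
      have h2 : 0 < e + 1 := by linarith
      rw [hkey] at h2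
      have h3 := (div_pos_iff).1 h2
      have h4 : 0 < α * ((N:ℝ) - ((N:ℝ)-2*β)*p) := by
        rcases h3 with ⟨h5, _⟩ | ⟨_, h6⟩
        · exact h5
        · nlinarith
      have h5 : 0 < (N:ℝ) - ((N:ℝ)-2*β)*p := by nlinarith
      rw [lt_div_iff₀ hN2]; linarith
    · intro h
      rw [lt_div_iff₀ hN2] at h
      have h5 : 0 < (N:ℝ) - ((N:ℝ)-2*β)*p := by linarith
      have h6 : 0 < e + 1 := by
        rw [hkey]; exact div_pos (mul_pos hα0 h5) (by positivity)
      linarith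
  have hrw : (∫⁻ t in Set.Ioc (0:ℝ) T, eLpNorm (fun x => Y x t) q volume)
      = (∫⁻ t in Set.Ioc (0:ℝ) T, ENNReal.ofReal (t ^ e)) * K := by
    rw [setLIntegral_congr_fun measurableSet_Ioc hscale]
    exact lintegral_mul_const'' K
      ((measurable_id.pow measurable_const).ennreal_ofReal.aemeasurable)
  have hJiff : (∫⁻ t in Set.Ioc (0:ℝ) T, ENNReal.ofReal (t ^ e)) < ∞ ↔ -1 < e := by
    have hmeas : Measurable fun t : ℝ => t ^ e := measurable_id.pow measurable_const
    have heq2 : (∫⁻ t in Set.Ioc (0:ℝ) T, ENNReal.ofReal (t ^ e))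
        = ∫⁻ t in Set.Ioc (0:ℝ) T, (‖t ^ e‖₊ : ℝ≥0∞) :=
      setLIntegral_congr_fun measurableSet_Ioc (fun t ht => by
        rw [← enorm_eq_nnnorm, Real.enorm_eq_ofReal (Real.rpow_nonneg ht.1.le _)])
    rw [heq2]
    constructor
    · intro h
      have hInt : IntegrableOn (fun t : ℝ => t ^ e) (Set.Ioc 0 T) :=
        ⟨hmeas.aestronglyMeasurable, h⟩
      rwa [integrableOn_Ioc_iff_integrableOn_Ioo, intervalIntegral.integrableOn_Ioo_rpow_iff hT] at hInt
    · intro h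
      have hInt : IntegrableOn (fun t : ℝ => t ^ e) (Set.Ioc 0 T) := by
        rw [integrableOn_Ioc_iff_integrableOn_Ioo]
        exact (intervalIntegral.integrableOn_Ioo_rpow_iff hT).2 h
      exact hInt.2
  rw [hrw]
  constructor
  · intro h
    refine harith.1 (hJiff.1 ?_)
    by_contra hc
    rw [not_lt, top_le_iff] at hc
    rw [hc, ENNReal.top_mul hK0] at h
    exact absurd h (lt_irrefl _)
  · intro h
    exact ENNReal.mul_lt_top (hJiff.2 (harith.2 h)) hKfin
end

section
/- Let a > 0 and γ ∈ ℝ. There exist constants 0 < c ≤ C such that for all t ≥ 2: if γ < 1 then c t^{a−γ} ≤ ∫₀ᵗ (t−s)^{a−1}(1+s)^{−γ} ds ≤ C t^{a−γ}; if γ = 1 then c t^{a−1} log t ≤ ∫₀ᵗ (t−s)^{a−1}(1+s)^{−1} ds ≤ C t^{a−1} log t; and if γ > 1 then c t^{a−1} ≤ ∫₀ᵗ (t−s)^{a−1}(1+s)^{−γ} ds ≤ C t^{a−1}. -/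
open MeasureTheory Real Set Filter
open scoped ENNReal

private lemma rpow_ratio {x y : ℝ} (e : ℝ) (hx : 0 < x) (h1 : x ≤ 2*y) (h2 : y ≤ 2*x) :
    y ^ e ≤ 2 ^ |e| * x ^ e := by
  have hy : 0 < y := by linarith
  rcases le_or_gt 0 e with he | he
  · rw [abs_of_nonneg he]
    calc y ^ e ≤ (2*x) ^ e := Real.rpow_le_rpow hy.le h2 he
      _ = 2 ^ e * x ^ e := Real.mul_rpow (by norm_num) hx.le
  · rw [abs_of_neg he]
    have hx2 : x / 2 ≤ y := by linarith
    calc y ^ e ≤ (x/2) ^ e := Real.rpow_le_rpow_of_nonpos (by linarith) hx2 he.le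
      _ = x ^ e / 2 ^ e := Real.div_rpow hx.le (by norm_num) e
      _ = 2 ^ (-e) * x ^ e := by
          rw [Real.rpow_neg (by norm_num : (0:ℝ) ≤ 2)]; ring

private lemma rpow_ratio' {x y : ℝ} (e : ℝ) (hx : 0 < x) (h1 : x ≤ 2*y) (h2 : y ≤ 2*x) :
    2 ^ (-|e|) * x ^ e ≤ y ^ e := by
  have hy : 0 < y := by linarith
  have h := rpow_ratio e hy h2 h1
  have h2p : (0:ℝ) < 2 ^ (-|e|) := by positivity
  calc 2 ^ (-|e|) * x ^ e ≤ 2 ^ (-|e|) * (2 ^ |e| * y ^ e) := by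
        exact mul_le_mul_of_nonneg_left h h2p.le
    _ = (2:ℝ) ^ (-|e| + |e|) * y ^ e := by rw [Real.rpow_add (by norm_num : (0:ℝ) < 2)]; ring
    _ = y ^ e := by norm_num

private lemma integrable_pow1 (a t p q : ℝ) (ha : 0 < a) :
    IntervalIntegrable (fun s => (t - s) ^ (a-1)) volume p q := by
  have h := (intervalIntegral.intervalIntegrable_rpow' (a := t - p) (b := t - q) (r := a-1)
    (by linarith)).comp_sub_left t
  simpa [sub_sub_cancel] using h

private lemma integrable_kernel (a γ t p q : ℝ) (ha : 0 < a) (hp : 0 ≤ p) (hpq : p ≤ q) :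
    IntervalIntegrable (fun s => (t - s) ^ (a-1) * (1+s) ^ (-γ)) volume p q := by
  apply (integrable_pow1 a t p q ha).mul_continuousOn
  apply ContinuousOn.rpow_const
  · exact (continuous_const.add continuous_id).continuousOn
  · intro x hx
    rw [Set.uIcc_of_le hpq] at hx
    left
    have := hx.1
    intro h
    nlinarith

private lemma E1 (a t : ℝ) (ha : 0 < a) (ht : 0 < t) :
    ∫ s in (t/2)..t, (t - s) ^ (a-1) = (t/2) ^ a / a := by
  rw [intervalIntegral.integral_comp_sub_left (fun u => u ^ (a-1)) t]
  rw [show t - t = 0 by ring]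
  rw [integral_rpow (Or.inl (by linarith))]
  rw [show a - 1 + 1 = a by ring, show t - t/2 = t/2 by ring,
    Real.zero_rpow ha.ne', sub_zero]

private lemma E2 (γ t : ℝ) (hγ : γ ≠ 1) (ht : 0 < t) :
    ∫ s in (0:ℝ)..(t/2), (1 + s) ^ (-γ) = ((1+t/2) ^ (1-γ) - 1) / (1-γ) := by
  rw [intervalIntegral.integral_comp_add_left (fun u => u ^ (-γ)) 1]
  rw [integral_rpow (Or.inr ⟨by intro h; apply hγ; linarith [neg_injective h], by
    rw [Set.uIcc_of_le (by linarith : (1:ℝ)+0 ≤ 1+t/2)]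
    intro h
    have := h.1
    linarith⟩)]
  rw [show (1:ℝ)+0 = 1 by ring, Real.one_rpow, show -γ + 1 = 1 - γ by ring]

private lemma E2' (t : ℝ) (ht : 0 < t) :
    ∫ s in (0:ℝ)..(t/2), (1 + s) ^ (-(1:ℝ)) = Real.log (1 + t/2) := by
  simp_rw [Real.rpow_neg_one]
  rw [intervalIntegral.integral_comp_add_left (fun u => u⁻¹) 1]
  rw [integral_inv (by
    rw [Set.uIcc_of_le (by linarith : (1:ℝ)+0 ≤ 1+t/2)]
    intro h
    have := h.1
    linarith)]
  rw [show (1:ℝ)+0 = 1 by ring, div_one]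

private lemma integrable_pow2 (γ t : ℝ) (ht : 0 ≤ t) :
    IntervalIntegrable (fun s => (1+s) ^ (-γ)) volume 0 (t/2) := by
  apply ContinuousOn.intervalIntegrable
  apply ContinuousOn.rpow_const (continuous_const.add continuous_id).continuousOn
  intro x hx
  rw [Set.uIcc_of_le (by linarith : (0:ℝ) ≤ t/2)] at hx
  left; intro h; simp only [Pi.add_apply, id_eq] at h; linarith [hx.1]

private lemma pieceB_ub (a γ t : ℝ) (ha : 0 < a) (ht : 2 ≤ t) :
    ∫ s in (t/2)..t, (t - s) ^ (a-1) * (1+s) ^ (-γ) ≤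
      ((t/2) ^ a / a) * (2 ^ |γ| * t ^ (-γ)) := by
  have ht0 : (0:ℝ) < t := by linarith
  have h := intervalIntegral.integral_mono_on (μ := volume) (by linarith : t/2 ≤ t)
    (integrable_kernel a γ t (t/2) t ha (by linarith) (by linarith))
    ((integrable_pow1 a t (t/2) t ha).mul_const (2 ^ |γ| * t ^ (-γ)))
    (fun x hx => by
      have hx1 := hx.1; have hx2 := hx.2
      have key : (1+x) ^ (-γ) ≤ 2 ^ |(-γ)| * t ^ (-γ) :=
        rpow_ratio (-γ) ht0 (by linarith) (by linarith)
      rw [abs_neg] at key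
      exact mul_le_mul_of_nonneg_left key (Real.rpow_nonneg (by linarith) _))
  rw [intervalIntegral.integral_mul_const, E1 a t ha ht0] at h
  exact h

private lemma pieceB_lb (a γ t : ℝ) (ha : 0 < a) (ht : 2 ≤ t) :
    ((t/2) ^ a / a) * (2 ^ (-|γ|) * t ^ (-γ)) ≤
      ∫ s in (t/2)..t, (t - s) ^ (a-1) * (1+s) ^ (-γ) := by
  have ht0 : (0:ℝ) < t := by linarith
  have h := intervalIntegral.integral_mono_on (μ := volume) (by linarith : t/2 ≤ t)
    ((integrable_pow1 a t (t/2) t ha).mul_const (2 ^ (-|γ|) * t ^ (-γ)))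
    (integrable_kernel a γ t (t/2) t ha (by linarith) (by linarith))
    (fun x hx => by
      have hx1 := hx.1; have hx2 := hx.2
      have key : 2 ^ (-|(-γ)|) * t ^ (-γ) ≤ (1+x) ^ (-γ) :=
        rpow_ratio' (-γ) ht0 (by linarith) (by linarith)
      rw [abs_neg] at key
      exact mul_le_mul_of_nonneg_left key (Real.rpow_nonneg (by linarith) _))
  rw [intervalIntegral.integral_mul_const, E1 a t ha ht0] at h
  exact h

private lemma pieceA_ub (a γ t : ℝ) (ha : 0 < a) (ht : 2 ≤ t) :
    ∫ s in (0:ℝ)..(t/2), (t - s) ^ (a-1) * (1+s) ^ (-γ) ≤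
      (2 ^ |a-1| * t ^ (a-1)) * ∫ s in (0:ℝ)..(t/2), (1+s) ^ (-γ) := by
  have ht0 : (0:ℝ) < t := by linarith
  have h := intervalIntegral.integral_mono_on (μ := volume) (by linarith : (0:ℝ) ≤ t/2)
    (integrable_kernel a γ t 0 (t/2) ha le_rfl (by linarith))
    ((integrable_pow2 γ t ht0.le).const_mul (2 ^ |a-1| * t ^ (a-1)))
    (fun x hx => by
      have hx1 := hx.1; have hx2 := hx.2
      have key : (t - x) ^ (a-1) ≤ 2 ^ |a-1| * t ^ (a-1) :=
        rpow_ratio (a-1) ht0 (by linarith) (by linarith)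
      exact mul_le_mul_of_nonneg_right key (Real.rpow_nonneg (by linarith) _))
  rw [intervalIntegral.integral_const_mul] at h
  exact h

private lemma pieceA_lb (a γ t : ℝ) (ha : 0 < a) (ht : 2 ≤ t) :
    (2 ^ (-|a-1|) * t ^ (a-1)) * (∫ s in (0:ℝ)..(t/2), (1+s) ^ (-γ)) ≤
      ∫ s in (0:ℝ)..(t/2), (t - s) ^ (a-1) * (1+s) ^ (-γ) := by
  have ht0 : (0:ℝ) < t := by linarith
  have h := intervalIntegral.integral_mono_on (μ := volume) (by linarith : (0:ℝ) ≤ t/2)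
    ((integrable_pow2 γ t ht0.le).const_mul (2 ^ (-|a-1|) * t ^ (a-1)))
    (integrable_kernel a γ t 0 (t/2) ha le_rfl (by linarith))
    (fun x hx => by
      have hx1 := hx.1; have hx2 := hx.2
      have key : 2 ^ (-|a-1|) * t ^ (a-1) ≤ (t - x) ^ (a-1) :=
        rpow_ratio' (a-1) ht0 (by linarith) (by linarith)
      exact mul_le_mul_of_nonneg_right key (Real.rpow_nonneg (by linarith) _))
  rw [intervalIntegral.integral_const_mul] at h
  exact h

private lemma I_eq (a γ t : ℝ) (ha : 0 < a) (ht : 2 ≤ t) :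
    (∫ s in Set.Ioo (0:ℝ) t, (t - s) ^ (a-1) * (1+s) ^ (-γ)) =
      (∫ s in (0:ℝ)..(t/2), (t - s) ^ (a-1) * (1+s) ^ (-γ))
      + ∫ s in (t/2)..t, (t - s) ^ (a-1) * (1+s) ^ (-γ) := by
  rw [← MeasureTheory.integral_Ioc_eq_integral_Ioo,
    ← intervalIntegral.integral_of_le (by linarith : (0:ℝ) ≤ t),
    ← intervalIntegral.integral_add_adjacent_intervals
      (integrable_kernel a γ t 0 (t/2) ha le_rfl (by linarith))
      (integrable_kernel a γ t (t/2) t ha (by linarith) (by linarith))]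

private lemma I_eq1 (a γ t : ℝ) (ha : 0 < a) (ht : 2 ≤ t) :
    (∫ s in Set.Ioo (0:ℝ) t, (t - s) ^ (a-1) * (1+s) ^ (-γ)) =
      (∫ s in (0:ℝ)..(1:ℝ), (t - s) ^ (a-1) * (1+s) ^ (-γ))
      + ∫ s in (1:ℝ)..t, (t - s) ^ (a-1) * (1+s) ^ (-γ) := by
  rw [← MeasureTheory.integral_Ioc_eq_integral_Ioo,
    ← intervalIntegral.integral_of_le (by linarith : (0:ℝ) ≤ t),
    ← intervalIntegral.integral_add_adjacent_intervals
      (integrable_kernel a γ t 0 1 ha le_rfl (by norm_num))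
      (integrable_kernel a γ t 1 t ha (by norm_num) (by linarith))]

private lemma piece_nonneg (a γ t p q : ℝ) (hpq : p ≤ q) (hq : q ≤ t) (hp : 0 ≤ p) :
    0 ≤ ∫ s in p..q, (t - s) ^ (a-1) * (1+s) ^ (-γ) :=
  intervalIntegral.integral_nonneg hpq (fun u hu =>
    mul_nonneg (Real.rpow_nonneg (by linarith [hu.2]) _)
      (Real.rpow_nonneg (by linarith [hu.1]) _))

theorem convolution_time_integral_asymptotics (a γ : ℝ) (ha : 0 < a) :
    ∃ c C : ℝ, 0 < c ∧ c ≤ C ∧ ∀ t : ℝ, 2 ≤ t →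
      (γ < 1 →
        c * t ^ (a - γ) ≤ (∫ s in Set.Ioo (0:ℝ) t, (t - s) ^ (a - 1) * (1 + s) ^ (-γ)) ∧
        (∫ s in Set.Ioo (0:ℝ) t, (t - s) ^ (a - 1) * (1 + s) ^ (-γ)) ≤ C * t ^ (a - γ)) ∧
      (γ = 1 →
        c * t ^ (a - 1) * Real.log t ≤
            (∫ s in Set.Ioo (0:ℝ) t, (t - s) ^ (a - 1) * (1 + s) ^ (-(1:ℝ))) ∧
        (∫ s in Set.Ioo (0:ℝ) t, (t - s) ^ (a - 1) * (1 + s) ^ (-(1:ℝ))) ≤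
            C * t ^ (a - 1) * Real.log t) ∧
      (1 < γ →
        c * t ^ (a - 1) ≤ (∫ s in Set.Ioo (0:ℝ) t, (t - s) ^ (a - 1) * (1 + s) ^ (-γ)) ∧
        (∫ s in Set.Ioo (0:ℝ) t, (t - s) ^ (a - 1) * (1 + s) ^ (-γ)) ≤ C * t ^ (a - 1)) := by
  rcases lt_trichotomy γ 1 with hγ | hγ | hγ
  · -- γ < 1
    set c : ℝ := 2 ^ (-|γ|) / ((2:ℝ) ^ a * a) with hc
    set C : ℝ := 2 ^ |a-1| / (1-γ) + 2 ^ |γ| / ((2:ℝ) ^ a * a) with hC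
    refine ⟨c, max c C, by positivity, le_max_left _ _, fun t ht => ?_⟩
    have ht0 : (0:ℝ) < t := by linarith
    have h2a : ((2:ℝ) ^ a) ≠ 0 := by positivity
    have hhalf : (t/2) ^ a = t ^ a / 2 ^ a := Real.div_rpow ht0.le (by norm_num) a
    have hX1 : t ^ (-γ) * t ^ a = t ^ (a - γ) := by
      rw [← Real.rpow_add ht0]; ring_nf
    have hX2 : t ^ (a-1) * t ^ (1-γ) = t ^ (a - γ) := by
      rw [← Real.rpow_add ht0]; ring_nf
    refine ⟨fun _ => ⟨?_, ?_⟩, fun h => by simp [h] at hγ, fun h => by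
      exact absurd (h.trans hγ) (lt_irrefl 1)⟩
    · -- lower bound
      have hlb := pieceB_lb a γ t ha ht
      have hA0 := piece_nonneg a γ t 0 (t/2) (by linarith) (by linarith) le_rfl
      have e0 : ((t/2) ^ a / a) * (2 ^ (-|γ|) * t ^ (-γ)) = c * t ^ (a-γ) := by
        rw [hhalf, ← hX1, hc]; ring
      rw [I_eq a γ t ha ht]
      linarith
    · -- upper bound
      have hJ := E2 γ t hγ.ne ht0
      have hJle : ((1+t/2) ^ (1-γ) - 1) / (1-γ) ≤ t ^ (1-γ) / (1-γ) := by
        refine (div_le_div_iff_of_pos_right (by linarith : (0:ℝ) < 1-γ)).mpr ?_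
        have h1 : (1+t/2) ^ (1-γ) ≤ t ^ (1-γ) :=
          Real.rpow_le_rpow (by linarith) (by linarith) (by linarith)
        linarith
      have hAub := pieceA_ub a γ t ha ht
      have hA2 : (2 ^ |a-1| * t ^ (a-1)) * (((1+t/2) ^ (1-γ) - 1) / (1-γ)) ≤
          (2 ^ |a-1| * t ^ (a-1)) * (t ^ (1-γ) / (1-γ)) :=
        mul_le_mul_of_nonneg_left hJle (by positivity)
      have e1 : (2 ^ |a-1| * t ^ (a-1)) * (t ^ (1-γ) / (1-γ)) =
          2 ^ |a-1| / (1-γ) * t ^ (a-γ) := by rw [← hX2]; ring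
      have hBub := pieceB_ub a γ t ha ht
      have e2 : ((t/2) ^ a / a) * (2 ^ |γ| * t ^ (-γ)) =
          2 ^ |γ| / ((2:ℝ) ^ a * a) * t ^ (a-γ) := by rw [hhalf, ← hX1]; ring
      have hbump : C * t ^ (a-γ) ≤ max c C * t ^ (a-γ) :=
        mul_le_mul_of_nonneg_right (le_max_right c C) (Real.rpow_nonneg ht0.le _)
      rw [I_eq a γ t ha ht]
      rw [hJ] at hAub
      rw [hC] at hbump
      linarith
  · -- γ = 1
    set c : ℝ := 2 ^ (-|a-1|) / 2 with hc
    set C : ℝ := 2 ^ |a-1| + 2 / ((2:ℝ) ^ a * a * Real.log 2) with hC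
    have hlog2 : (0:ℝ) < Real.log 2 := Real.log_pos (by norm_num)
    refine ⟨c, max c C, by positivity, le_max_left _ _, fun t ht => ?_⟩
    have ht0 : (0:ℝ) < t := by linarith
    have hhalf : (t/2) ^ a = t ^ a / 2 ^ a := Real.div_rpow ht0.le (by norm_num) a
    have hX3 : t ^ (-(1:ℝ)) * t ^ a = t ^ (a - 1) := by
      rw [← Real.rpow_add ht0]; ring_nf
    have hlogt : Real.log 2 ≤ Real.log t := Real.log_le_log (by norm_num) ht
    have hlogt0 : 0 ≤ Real.log t := by linarith
    have hP : (0:ℝ) ≤ t ^ (a-1) := Real.rpow_nonneg ht0.le _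
    refine ⟨fun h => by simp [hγ] at h, fun _ => ⟨?_, ?_⟩, fun h => by simp [hγ] at h⟩
    · -- lower bound
      have hAlb := pieceA_lb a 1 t ha ht
      rw [E2' t ht0] at hAlb
      have hs : Real.sqrt t ≤ 1 + t/2 := by
        nlinarith [Real.sq_sqrt (by linarith : (0:ℝ) ≤ t), Real.sqrt_nonneg t]
      have hlog : Real.log t / 2 ≤ Real.log (1 + t/2) := by
        have h1 := Real.log_le_log (Real.sqrt_pos.mpr ht0) hs
        rwa [Real.log_sqrt ht0.le] at h1
      have hA2 : (2 ^ (-|a-1|) * t ^ (a-1)) * (Real.log t / 2) ≤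
          (2 ^ (-|a-1|) * t ^ (a-1)) * Real.log (1 + t/2) :=
        mul_le_mul_of_nonneg_left hlog (by positivity)
      have e0 : (2 ^ (-|a-1|) * t ^ (a-1)) * (Real.log t / 2) =
          c * t ^ (a-1) * Real.log t := by rw [hc]; ring
      have hB0 := piece_nonneg a 1 t (t/2) t (by linarith) le_rfl (by linarith)
      rw [I_eq a 1 t ha ht]
      linarith
    · -- upper bound
      have hAub := pieceA_ub a 1 t ha ht
      rw [E2' t ht0] at hAub
      have hA2 : (2 ^ |a-1| * t ^ (a-1)) * Real.log (1 + t/2) ≤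
          (2 ^ |a-1| * t ^ (a-1)) * Real.log t :=
        mul_le_mul_of_nonneg_left (Real.log_le_log (by linarith) (by linarith))
          (by positivity)
      have hBub := pieceB_ub a 1 t ha ht
      have e2 : ((t/2) ^ a / a) * (2 ^ |(1:ℝ)| * t ^ (-(1:ℝ))) =
          2 / ((2:ℝ) ^ a * a) * t ^ (a-1) := by
        rw [show |(1:ℝ)| = 1 by norm_num, Real.rpow_one, hhalf, ← hX3]; ring
      have h1le : (1:ℝ) ≤ Real.log t / Real.log 2 := (one_le_div hlog2).mpr hlogt
      have hB2 : 2 / ((2:ℝ) ^ a * a) * t ^ (a-1) * 1 ≤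
          2 / ((2:ℝ) ^ a * a) * t ^ (a-1) * (Real.log t / Real.log 2) :=
        mul_le_mul_of_nonneg_left h1le (by positivity)
      have e3 : 2 / ((2:ℝ) ^ a * a) * t ^ (a-1) * (Real.log t / Real.log 2) =
          2 / ((2:ℝ) ^ a * a * Real.log 2) * t ^ (a-1) * Real.log t := by ring
      have hbump : C * (t ^ (a-1) * Real.log t) ≤ max c C * (t ^ (a-1) * Real.log t) :=
        mul_le_mul_of_nonneg_right (le_max_right c C) (mul_nonneg hP hlogt0)
      have e4 : C * (t ^ (a-1) * Real.log t) =
          2 ^ |a-1| * t ^ (a-1) * Real.log t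
          + 2 / ((2:ℝ) ^ a * a * Real.log 2) * t ^ (a-1) * Real.log t := by
        rw [hC]; ring
      have e5 : max c C * (t ^ (a-1) * Real.log t) = max c C * t ^ (a-1) * Real.log t := by
        ring
      rw [I_eq a 1 t ha ht]
      have hBfin : (∫ s in (t/2)..t, (t - s) ^ (a-1) * (1+s) ^ (-(1:ℝ))) ≤
          2 / ((2:ℝ) ^ a * a * Real.log 2) * t ^ (a-1) * Real.log t := by
        refine ((hBub.trans_eq e2).trans ?_)
        calc 2 / ((2:ℝ) ^ a * a) * t ^ (a-1)
            = 2 / ((2:ℝ) ^ a * a) * t ^ (a-1) * 1 := by ring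
          _ ≤ 2 / ((2:ℝ) ^ a * a) * t ^ (a-1) * (Real.log t / Real.log 2) := hB2
          _ = 2 / ((2:ℝ) ^ a * a * Real.log 2) * t ^ (a-1) * Real.log t := e3
      have hAfin : (∫ s in (0:ℝ)..(t/2), (t - s) ^ (a-1) * (1+s) ^ (-(1:ℝ))) ≤
          2 ^ |a-1| * t ^ (a-1) * Real.log t := hAub.trans hA2
      calc (∫ s in (0:ℝ)..(t/2), (t - s) ^ (a-1) * (1+s) ^ (-(1:ℝ)))
            + (∫ s in (t/2)..t, (t - s) ^ (a-1) * (1+s) ^ (-(1:ℝ)))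
          ≤ 2 ^ |a-1| * t ^ (a-1) * Real.log t
            + 2 / ((2:ℝ) ^ a * a * Real.log 2) * t ^ (a-1) * Real.log t :=
            add_le_add hAfin hBfin
        _ = C * (t ^ (a-1) * Real.log t) := e4.symm
        _ ≤ max c C * (t ^ (a-1) * Real.log t) := hbump
        _ = max c C * t ^ (a-1) * Real.log t := e5
  · -- γ > 1
    set c : ℝ := 2 ^ (-|a-1|) * 2 ^ (-|γ|) with hc
    set C : ℝ := 2 ^ |a-1| / (γ-1) + 2 ^ |γ| / ((2:ℝ) ^ a * a) with hC
    refine ⟨c, max c C, by positivity, le_max_left _ _, fun t ht => ?_⟩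
    have ht0 : (0:ℝ) < t := by linarith
    have hhalf : (t/2) ^ a = t ^ a / 2 ^ a := Real.div_rpow ht0.le (by norm_num) a
    have hX1 : t ^ (-γ) * t ^ a = t ^ (a - γ) := by
      rw [← Real.rpow_add ht0]; ring_nf
    refine ⟨fun h => by exact absurd (hγ.trans h) (lt_irrefl 1),
      fun h => by simp [h] at hγ, fun _ => ⟨?_, ?_⟩⟩
    · -- lower bound
      have hT0 := piece_nonneg a γ t 1 t (by linarith) le_rfl (by norm_num)
      have hfirst : c * t ^ (a-1) ≤
          ∫ s in (0:ℝ)..(1:ℝ), (t - s) ^ (a-1) * (1+s) ^ (-γ) := by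
        have h := intervalIntegral.integral_mono_on (μ := volume)
          (by norm_num : (0:ℝ) ≤ 1)
          (intervalIntegrable_const (c := c * t ^ (a-1)))
          (integrable_kernel a γ t 0 1 ha le_rfl (by norm_num))
          (fun x hx => by
            have hx1 := hx.1; have hx2 := hx.2
            have k1 : 2 ^ (-|a-1|) * t ^ (a-1) ≤ (t - x) ^ (a-1) :=
              rpow_ratio' (a-1) ht0 (by linarith) (by linarith)
            have k2 : 2 ^ (-|(-γ)|) * (1:ℝ) ^ (-γ) ≤ (1+x) ^ (-γ) :=
              rpow_ratio' (-γ) (by norm_num) (by linarith) (by linarith)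
            rw [abs_neg, Real.one_rpow, mul_one] at k2
            have := mul_le_mul k1 k2 (by positivity)
              (Real.rpow_nonneg (by linarith) _)
            calc c * t ^ (a-1)
                = (2 ^ (-|a-1|) * t ^ (a-1)) * (2 ^ (-|γ|)) := by rw [hc]; ring
              _ ≤ (t - x) ^ (a-1) * (1+x) ^ (-γ) := this)
        rwa [intervalIntegral.integral_const, smul_eq_mul, sub_zero, one_mul] at h
      rw [I_eq1 a γ t ha ht]
      linarith
    · -- upper bound
      have hγ1 : (0:ℝ) < γ - 1 := by linarith
      have hAub := pieceA_ub a γ t ha ht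
      rw [E2 γ t (by intro h; rw [h] at hγ; exact lt_irrefl 1 hγ) ht0] at hAub
      have hx0 : 0 ≤ (1+t/2) ^ (1-γ) := Real.rpow_nonneg (by linarith) _
      have heq : ((1+t/2) ^ (1-γ) - 1) / (1-γ) = (1 - (1+t/2) ^ (1-γ)) / (γ-1) := by
        rw [div_eq_div_iff (by linarith) (by linarith)]; ring
      have hJle : ((1+t/2) ^ (1-γ) - 1) / (1-γ) ≤ 1 / (γ-1) := by
        rw [heq]
        exact (div_le_div_iff_of_pos_right hγ1).mpr (by linarith)
      have hA2 : (2 ^ |a-1| * t ^ (a-1)) * (((1+t/2) ^ (1-γ) - 1) / (1-γ)) ≤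
          (2 ^ |a-1| * t ^ (a-1)) * (1 / (γ-1)) :=
        mul_le_mul_of_nonneg_left hJle (by positivity)
      have e1 : (2 ^ |a-1| * t ^ (a-1)) * (1 / (γ-1)) =
          2 ^ |a-1| / (γ-1) * t ^ (a-1) := by ring
      have hBub := pieceB_ub a γ t ha ht
      have e2 : ((t/2) ^ a / a) * (2 ^ |γ| * t ^ (-γ)) =
          2 ^ |γ| / ((2:ℝ) ^ a * a) * t ^ (a-γ) := by rw [hhalf, ← hX1]; ring
      have hB2 : 2 ^ |γ| / ((2:ℝ) ^ a * a) * t ^ (a-γ) ≤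
          2 ^ |γ| / ((2:ℝ) ^ a * a) * t ^ (a-1) :=
        mul_le_mul_of_nonneg_left
          (Real.rpow_le_rpow_of_exponent_le (by linarith) (by linarith))
          (by positivity)
      have hbump : C * t ^ (a-1) ≤ max c C * t ^ (a-1) :=
        mul_le_mul_of_nonneg_right (le_max_right c C) (Real.rpow_nonneg ht0.le _)
      rw [I_eq a γ t ha ht]
      rw [hC] at hbump
      linarith
end

section
/- Let p ∈ [1, ∞], γ ∈ ℝ, ν > 0, and let f(x,t) := (1+t)^{−γ} χ_{B₁}(x), where B₁ is the unit ball of ℝ^N. Then there exist c > 0 and t₀ ≥ 2 such that the mild solution u satisfies, for all t ≥ t₀, ‖u(·,t)‖_{L^p({|x| ≥ ν t^{α/(2β)}})} ≥ c t^{α−1−(αN/(2β))(1−1/p)} ∫₀^{t/2} (1+s)^{−γ} ds. In particular the exterior-region upper bounds (t^{−γ+α−(αN/(2β))(1−1/p)} for γ < 1, t^{−1+α−(αN/(2β))(1−1/p)} log t for γ = 1, t^{−1+α−(αN/(2β))(1−1/p)} for γ > 1) are sharp. -/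
set_option maxHeartbeats 2000000


open MeasureTheory Real Set Filter
open scoped ENNReal Pointwise
theorem exterior_region_lower_bound
    (N : ℕ) (α β : ℝ)
    (hα : 0 < α ∧ α < 1) (hβ : 0 < β ∧ β ≤ 1) (hN : 4 * β < (N : ℝ))
    (G : EuclideanSpace ℝ (Fin N) → ℝ)
    (hGmeas : Measurable G) (hGnonneg : ∀ ξ, 0 ≤ G ξ)
    (c₁ c₂ : ℝ) (hc₁ : 0 < c₁) (hc₂ : 0 < c₂)
    (hGin : ∀ ξ : EuclideanSpace ℝ (Fin N), 0 < ‖ξ‖ → ‖ξ‖ ≤ 1 →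
      c₁ * ‖ξ‖ ^ (4 * β - (N : ℝ)) ≤ G ξ ∧ G ξ ≤ c₂ * ‖ξ‖ ^ (4 * β - (N : ℝ)))
    (hGout : ∀ ξ : EuclideanSpace ℝ (Fin N), 1 ≤ ‖ξ‖ →
      c₁ * ‖ξ‖ ^ (-((N : ℝ) + 2 * β)) ≤ G ξ ∧ G ξ ≤ c₂ * ‖ξ‖ ^ (-((N : ℝ) + 2 * β)))
    (Y : EuclideanSpace ℝ (Fin N) → ℝ → ℝ)
    (hY : ∀ x t, Y x t = t ^ (α - 1 - α * (N : ℝ) / (2 * β)) * G ((t ^ (-(α / (2 * β)))) • x))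
    (γ : ℝ) (f : EuclideanSpace ℝ (Fin N) → ℝ → ℝ)
    (hf : ∀ x t, f x t =
      (1 + t) ^ (-γ) * Set.indicator (Metric.ball (0 : EuclideanSpace ℝ (Fin N)) 1) (fun _ => (1:ℝ)) x)
    (u : EuclideanSpace ℝ (Fin N) → ℝ → ℝ)
    (hu : ∀ x t, u x t = ∫ s in Set.Ioc (0:ℝ) t, ∫ y, Y (x - y) (t - s) * f y s)
    (p : ℝ≥0∞) (hp : 1 ≤ p) (ν : ℝ) (hν : 0 < ν) :
    ∃ c : ℝ, 0 < c ∧ ∃ t₀ : ℝ, 2 ≤ t₀ ∧ ∀ t : ℝ, t₀ ≤ t →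
      ENNReal.ofReal
          (c * t ^ (α - 1 - (α * (N : ℝ) / (2 * β)) * (1 - 1 / p.toReal)) *
            ∫ s in Set.Ioc (0:ℝ) (t / 2), (1 + s) ^ (-γ)) ≤
        eLpNorm (fun x => u x t) p
          (volume.restrict {x : EuclideanSpace ℝ (Fin N) | ν * t ^ (α / (2 * β)) ≤ ‖x‖}) := by
  obtain ⟨hα0, hα1⟩ := hα
  obtain ⟨hβ0, hβ1⟩ := hβ
  have hβ2 : (0:ℝ) < 2 * β := by linarith
  have hNR : (0:ℝ) < N := lt_trans (by positivity) hN
  have hN0 : 0 < N := by exact_mod_cast hNR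
  haveI : Nonempty (Fin N) := ⟨⟨0, hN0⟩⟩
  haveI : Nontrivial (EuclideanSpace ℝ (Fin N)) := by
    refine nontrivial_of_ne (EuclideanSpace.single (Classical.arbitrary (Fin N)) (1:ℝ)) 0 ?_
    intro h
    have := congrArg (fun v => v (Classical.arbitrary (Fin N))) h
    simp [EuclideanSpace.single_apply] at this
  set κ := α / (2 * β) with hκdef
  have hκ0 : 0 < κ := div_pos hα0 hβ2
  set a := α - 1 - α * (N:ℝ) / (2 * β) with hadef
  have haκN : a = α - 1 - κ * N := by rw [hadef, hκdef]; ring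
  have ha_neg : a < 0 := by
    have : 0 < α * N / (2*β) := by positivity
    rw [hadef]; linarith
  -- constants
  set R : ℝ := 2 ^ κ * (ν + 2) with hRdef
  have h2κ : (1:ℝ) ≤ 2 ^ κ := by
    rw [show (1:ℝ) = 1 ^ κ by rw [Real.one_rpow]]
    exact Real.rpow_le_rpow zero_le_one one_le_two hκ0.le
  have hR1 : 1 ≤ R := by
    calc (1:ℝ) ≤ ν + 2 := by linarith
    _ = 1 * (ν + 2) := by ring
    _ ≤ 2 ^ κ * (ν + 2) := mul_le_mul_of_nonneg_right h2κ (by linarith)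
  have hR0 : 0 < R := by linarith
  set m : ℝ := c₁ * R ^ (-((N:ℝ) + 2 * β)) with hmdef
  have hm0 : 0 < m := by
    have : (0:ℝ) < R ^ (-((N:ℝ) + 2 * β)) := Real.rpow_pos_of_pos hR0 _
    positivity
  set V : ℝ := (volume (Metric.ball (0:EuclideanSpace ℝ (Fin N)) 1)).toReal with hVdef
  have hVball_pos : 0 < volume (Metric.ball (0:EuclideanSpace ℝ (Fin N)) 1) :=
    Metric.measure_ball_pos volume 0 one_pos
  have hVball_fin : volume (Metric.ball (0:EuclideanSpace ℝ (Fin N)) 1) < ⊤ :=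
    measure_ball_lt_top
  have hV0 : 0 < V := ENNReal.toReal_pos hVball_pos.ne' hVball_fin.ne
  set W : ℝ := (2:ℝ)⁻¹ ^ N * V with hWdef
  have hW0 : 0 < W := by positivity
  set q : ℝ := p.toReal with hqdef
  have hq : 0 ≤ 1 / q := by positivity
  have hp0 : p ≠ 0 := (zero_lt_one.trans_le hp).ne'
  refine ⟨m * V * W ^ (1/q), by positivity, max 2 ((2/ν) ^ (1/κ)), le_max_left _ _, ?_⟩
  intro t ht
  have ht2 : 2 ≤ t := le_trans (le_max_left _ _) ht
  have ht0 : (0:ℝ) < t := by linarith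
  have ht1 : (1:ℝ) ≤ t := by linarith
  have htν : 2 ≤ ν * t ^ κ := by
    have h1 : (2/ν) ^ (1/κ) ≤ t := le_trans (le_max_right _ _) ht
    have h2 : ((2/ν) ^ (1/κ)) ^ κ ≤ t ^ κ :=
      Real.rpow_le_rpow (Real.rpow_nonneg (by positivity) _) h1 hκ0.le
    rw [← Real.rpow_mul (by positivity), one_div_mul_cancel hκ0.ne', Real.rpow_one] at h2
    calc (2:ℝ) = ν * (2/ν) := by field_simp
    _ ≤ ν * t ^ κ := mul_le_mul_of_nonneg_left h2 hν.le
  have htκ1 : (1:ℝ) ≤ t ^ κ := by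
    calc (1:ℝ) = 1 ^ κ := (Real.one_rpow _).symm
    _ ≤ t ^ κ := Real.rpow_le_rpow zero_le_one ht1 hκ0.le
  have htκ0 : (0:ℝ) < t ^ κ := by linarith
  set r₁ : ℝ := ν * t ^ κ with hr₁def
  set r₂ : ℝ := (ν+1) * t ^ κ with hr₂def
  have hr₁2 : 2 ≤ r₁ := htν
  have hr12 : r₁ ≤ r₂ := by
    rw [hr₁def, hr₂def]
    exact mul_le_mul_of_nonneg_right (by linarith) htκ0.le
  set I : ℝ := ∫ s in Set.Ioc (0:ℝ) (t / 2), (1 + s) ^ (-γ) with hIdef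
  have hI0 : 0 ≤ I := by
    apply setIntegral_nonneg measurableSet_Ioc
    intro s hs
    exact Real.rpow_nonneg (by linarith [hs.1]) _
  -- the kernel is nonnegative
  have hYnn : ∀ (z : EuclideanSpace ℝ (Fin N)) (τ : ℝ), 0 ≤ τ → 0 ≤ Y z τ := by
    intro z τ hτ
    rw [hY]
    exact mul_nonneg (Real.rpow_nonneg hτ _) (hGnonneg _)
  have hfnn : ∀ (y : EuclideanSpace ℝ (Fin N)) (s : ℝ), 0 ≤ s → 0 ≤ f y s := by
    intro y s hs
    rw [hf]
    exact mul_nonneg (Real.rpow_nonneg (by linarith) _)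
      (Set.indicator_nonneg (fun _ _ => zero_le_one) _)
  set M : ℝ := max 1 ((1+t) ^ (-γ)) with hMdef
  have hM0 : 0 < M := lt_of_lt_of_le zero_lt_one (le_max_left _ _)
  have hMb : ∀ s : ℝ, 0 ≤ s → s ≤ t → (1+s) ^ (-γ) ≤ M := by
    intro s hs hst
    rcases le_or_gt 0 γ with hγ | hγ
    · refine le_trans ?_ (le_max_left _ _)
      exact Real.rpow_le_one_of_one_le_of_nonpos (by linarith) (by linarith)
    · refine le_trans ?_ (le_max_right _ _)
      exact Real.rpow_le_rpow (by linarith) (by linarith) (by linarith)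
  -- key pointwise lower bound
  have key : ∀ x : EuclideanSpace ℝ (Fin N), r₁ ≤ ‖x‖ → ‖x‖ ≤ r₂ →
      m * V * t ^ a * I ≤ u x t := by
    intro x hx1 hx2
    -- norm bounds for x - y with y in the unit ball
    have hxy_lb : ∀ y : EuclideanSpace ℝ (Fin N), y ∈ Metric.ball (0:EuclideanSpace ℝ (Fin N)) 1 →
        1 ≤ ‖x - y‖ := by
      intro y hy
      rw [mem_ball_zero_iff] at hy
      have := norm_sub_norm_le x y
      linarith
    have hxy_ub : ∀ y : EuclideanSpace ℝ (Fin N), y ∈ Metric.ball (0:EuclideanSpace ℝ (Fin N)) 1 →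
        ‖x - y‖ ≤ (ν + 2) * t ^ κ := by
      intro y hy
      rw [mem_ball_zero_iff] at hy
      have := norm_sub_le x y
      have h1 : ‖x - y‖ ≤ r₂ + 1 := by linarith
      rw [hr₂def] at h1
      have h2 : (ν+1) * t ^ κ + t ^ κ = (ν + 2) * t ^ κ := by ring
      linarith
    -- norm of the rescaled variable
    have hnorm_smul : ∀ (τ : ℝ), 0 < τ → ∀ y : EuclideanSpace ℝ (Fin N),
        ‖(τ ^ (-κ)) • (x - y)‖ = τ ^ (-κ) * ‖x - y‖ := by
      intro τ hτ y
      rw [norm_smul, Real.norm_eq_abs, abs_of_pos (Real.rpow_pos_of_pos hτ _)]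
    -- upper bound on the kernel (for integrability)
    have hup : ∀ s : ℝ, 0 < s → s ≤ t → ∀ y ∈ Metric.ball (0:EuclideanSpace ℝ (Fin N)) 1,
        Y (x - y) (t - s) ≤ c₂ * (1 + (t - s) ^ (2*α - 1)) := by
      intro s hs hst y hy
      rcases eq_or_lt_of_le (sub_nonneg.mpr hst) with hτ0 | hτ0
      · rw [hY, ← hτ0, Real.zero_rpow ha_neg.ne, zero_mul]
        positivity
      · set τ := t - s with hτdef
        set ξ := (τ ^ (-κ)) • (x - y) with hξdef
        have hξnorm : ‖ξ‖ = τ ^ (-κ) * ‖x - y‖ := hnorm_smul τ hτ0 y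
        have hτκpos : 0 < τ ^ (-κ) := Real.rpow_pos_of_pos hτ0 _
        have hxylb := hxy_lb y hy
        have hξpos : 0 < ‖ξ‖ := by
          rw [hξnorm]; exact mul_pos hτκpos (by linarith)
        have hξlb : τ ^ (-κ) ≤ ‖ξ‖ := by
          rw [hξnorm]; exact le_mul_of_one_le_right hτκpos.le hxylb
        rw [hY, ← hξdef]
        have hτa : (0:ℝ) < τ ^ a := Real.rpow_pos_of_pos hτ0 _
        have hτ2α : (0:ℝ) ≤ τ ^ (2*α - 1) := Real.rpow_nonneg hτ0.le _
        rcases le_total ‖ξ‖ 1 with hc | hc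
        · -- small ξ : τ must be at least 1
          have h1τ : 1 ≤ τ := by
            by_contra hcon
            push_neg at hcon
            have : 1 < τ ^ (-κ) :=
              (Real.one_lt_rpow_iff_of_pos hτ0).2 (Or.inr ⟨hcon, by linarith⟩)
            linarith
          have hG := (hGin ξ hξpos hc).2
          have hle : ‖ξ‖ ^ (4*β - (N:ℝ)) ≤ (τ ^ (-κ)) ^ (4*β - (N:ℝ)) :=
            Real.rpow_le_rpow_of_nonpos hτκpos hξlb (by linarith)
          have hrw : τ ^ a * (τ ^ (-κ)) ^ (4*β - (N:ℝ)) = τ ^ (-(1+α)) := by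
            rw [← Real.rpow_mul hτ0.le, ← Real.rpow_add hτ0]
            congr 1
            rw [haκN, hκdef]
            field_simp
            ring
          calc τ ^ a * G ξ ≤ τ ^ a * (c₂ * ‖ξ‖ ^ (4*β - (N:ℝ))) :=
              mul_le_mul_of_nonneg_left hG hτa.le
            _ ≤ τ ^ a * (c₂ * (τ ^ (-κ)) ^ (4*β - (N:ℝ))) :=
              mul_le_mul_of_nonneg_left (mul_le_mul_of_nonneg_left hle hc₂.le) hτa.le
            _ = c₂ * (τ ^ a * (τ ^ (-κ)) ^ (4*β - (N:ℝ))) := by ring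
            _ = c₂ * τ ^ (-(1+α)) := by rw [hrw]
            _ ≤ c₂ * 1 := mul_le_mul_of_nonneg_left
                (Real.rpow_le_one_of_one_le_of_nonpos h1τ (by linarith)) hc₂.le
            _ ≤ c₂ * (1 + τ ^ (2*α - 1)) := mul_le_mul_of_nonneg_left (by linarith) hc₂.le
        · have hG := (hGout ξ hc).2
          have hle : ‖ξ‖ ^ (-((N:ℝ) + 2*β)) ≤ (τ ^ (-κ)) ^ (-((N:ℝ) + 2*β)) :=
            Real.rpow_le_rpow_of_nonpos hτκpos hξlb (neg_nonpos.mpr (by positivity))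
          have hrw : τ ^ a * (τ ^ (-κ)) ^ (-((N:ℝ) + 2*β)) = τ ^ (2*α - 1) := by
            rw [← Real.rpow_mul hτ0.le, ← Real.rpow_add hτ0]
            congr 1
            rw [haκN, hκdef]
            field_simp
            ring
          calc τ ^ a * G ξ ≤ τ ^ a * (c₂ * ‖ξ‖ ^ (-((N:ℝ) + 2*β))) :=
              mul_le_mul_of_nonneg_left hG hτa.le
            _ ≤ τ ^ a * (c₂ * (τ ^ (-κ)) ^ (-((N:ℝ) + 2*β))) :=
              mul_le_mul_of_nonneg_left (mul_le_mul_of_nonneg_left hle hc₂.le) hτa.le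
            _ = c₂ * (τ ^ a * (τ ^ (-κ)) ^ (-((N:ℝ) + 2*β))) := by ring
            _ = c₂ * τ ^ (2*α - 1) := by rw [hrw]
            _ ≤ c₂ * (1 + τ ^ (2*α - 1)) := mul_le_mul_of_nonneg_left (by linarith) hc₂.le
    -- joint measurability
    have hgm : Measurable (fun z : ℝ × EuclideanSpace ℝ (Fin N) =>
        Y (x - z.2) (t - z.1) * f z.2 z.1) := by
      have hrwg : (fun z : ℝ × EuclideanSpace ℝ (Fin N) => Y (x - z.2) (t - z.1) * f z.2 z.1)
          = fun z => ((t - z.1) ^ a * G (((t - z.1) ^ (-κ)) • (x - z.2))) *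
            ((1 + z.1) ^ (-γ) * Set.indicator (Metric.ball (0 : EuclideanSpace ℝ (Fin N)) 1)
              (fun _ => (1:ℝ)) z.2) := by
        funext z; rw [hY, hf]
      rw [hrwg]
      have m1 : Measurable (fun z : ℝ × EuclideanSpace ℝ (Fin N) => (t - z.1) ^ a) := by
        fun_prop
      have m2 : Measurable (fun z : ℝ × EuclideanSpace ℝ (Fin N) =>
          ((t - z.1) ^ (-κ)) • (x - z.2)) := by fun_prop
      have m4 : Measurable (fun z : ℝ × EuclideanSpace ℝ (Fin N) => (1 + z.1) ^ (-γ)) := by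
        fun_prop
      have m5 : Measurable (fun z : ℝ × EuclideanSpace ℝ (Fin N) =>
          Set.indicator (Metric.ball (0 : EuclideanSpace ℝ (Fin N)) 1) (fun _ => (1:ℝ)) z.2) :=
        (measurable_const.indicator measurableSet_ball).comp measurable_snd
      exact (m1.mul (hGmeas.comp m2)).mul (m4.mul m5)
    have hgms : ∀ s : ℝ, Measurable (fun y => Y (x - y) (t - s) * f y s) := by
      intro s
      exact hgm.comp (measurable_prodMk_left)
    have hFm : StronglyMeasurable (fun s : ℝ => ∫ y, Y (x - y) (t - s) * f y s) :=
      hgm.stronglyMeasurable.integral_prod_right'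
    -- pointwise bound of the inner integrand
    have hbound : ∀ s : ℝ, 0 < s → s ≤ t → ∀ y : EuclideanSpace ℝ (Fin N),
        ‖Y (x - y) (t - s) * f y s‖ ≤ Set.indicator (Metric.ball (0:EuclideanSpace ℝ (Fin N)) 1)
          (fun _ => c₂ * (1 + (t - s) ^ (2*α - 1)) * M) y := by
      intro s hs hst y
      rw [Real.norm_eq_abs, abs_of_nonneg (mul_nonneg (hYnn _ _ (by linarith)) (hfnn _ _ hs.le))]
      by_cases hy : y ∈ Metric.ball (0:EuclideanSpace ℝ (Fin N)) 1
      · rw [Set.indicator_of_mem hy, hf, Set.indicator_of_mem hy, mul_one]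
        have h1 := hup s hs hst y hy
        have h2 := hMb s hs.le hst
        have hyY := hYnn (x - y) (t - s) (by linarith)
        have hM' : 0 ≤ (1+s) ^ (-γ) := Real.rpow_nonneg (by linarith) _
        have h0 : (0:ℝ) ≤ (t-s) ^ (2*α - 1) := Real.rpow_nonneg (by linarith) _
        calc Y (x - y) (t - s) * (1 + s) ^ (-γ)
            ≤ (c₂ * (1 + (t-s) ^ (2*α - 1))) * M :=
            mul_le_mul h1 h2 hM' (mul_nonneg hc₂.le (by linarith))
          _ = c₂ * (1 + (t-s) ^ (2*α - 1)) * M := by ring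
      · rw [Set.indicator_of_notMem hy, hf, Set.indicator_of_notMem hy, mul_zero, mul_zero]
    have hind_int : ∀ s : ℝ, Integrable (Set.indicator (Metric.ball (0:EuclideanSpace ℝ (Fin N)) 1)
        (fun _ => c₂ * (1 + (t - s) ^ (2*α - 1)) * M)) volume := fun s =>
      (integrableOn_const measure_ball_lt_top.ne).integrable_indicator
        measurableSet_ball
    have hinner_int : ∀ s : ℝ, 0 < s → s ≤ t →
        Integrable (fun y => Y (x - y) (t - s) * f y s) volume := by
      intro s hs hst
      exact Integrable.mono' (hind_int s) ((hgms s).aestronglyMeasurable)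
        (Filter.Eventually.of_forall (hbound s hs hst))
    -- integrability of the bound in s
    have hb_int : IntegrableOn (fun s : ℝ => (t - s) ^ (2*α - 1)) (Set.Ioc 0 t) volume := by
      have h1 : IntervalIntegrable (fun x : ℝ => x ^ (2*α - 1)) volume 0 t :=
        intervalIntegral.intervalIntegrable_rpow' (by linarith)
      have h2 := h1.comp_sub_left t
      simp only [sub_zero, sub_self] at h2
      exact h2.2
    have hF_int : IntegrableOn (fun s : ℝ => ∫ y, Y (x - y) (t - s) * f y s)
        (Set.Ioc 0 t) volume := by
      refine Integrable.mono' (g := fun s => (c₂ * M * V) * (1 + (t - s) ^ (2*α - 1)))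
        ?_ (hFm.aestronglyMeasurable.restrict) ?_
      · exact (((integrableOn_const measure_Ioc_lt_top.ne).add hb_int).const_mul _)
      · rw [ae_restrict_iff' measurableSet_Ioc]
        refine Filter.Eventually.of_forall (fun s hs => ?_)
        calc ‖∫ y, Y (x - y) (t - s) * f y s‖
            ≤ ∫ y, Set.indicator (Metric.ball (0:EuclideanSpace ℝ (Fin N)) 1)
              (fun _ => c₂ * (1 + (t - s) ^ (2*α - 1)) * M) y :=
            norm_integral_le_of_norm_le (hind_int s)
              (Filter.Eventually.of_forall (hbound s hs.1 hs.2))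
          _ = (volume (Metric.ball (0:EuclideanSpace ℝ (Fin N)) 1)).toReal •
              (c₂ * (1 + (t - s) ^ (2*α - 1)) * M) :=
            integral_indicator_const _ measurableSet_ball
          _ = (c₂ * M * V) * (1 + (t - s) ^ (2*α - 1)) := by
            rw [smul_eq_mul, ← hVdef]; ring
    -- pointwise lower bound on the kernel, for s ≤ t/2
    have hlow : ∀ s ∈ Set.Ioc (0:ℝ) (t/2),
        (m * t ^ a * V) * (1+s) ^ (-γ) ≤ ∫ y, Y (x - y) (t - s) * f y s := by
      intro s hs
      obtain ⟨hs0, hs2⟩ := hs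
      have hst : s ≤ t := by linarith
      have hτ0 : (0:ℝ) < t - s := by linarith
      have hsγ : (0:ℝ) ≤ (1+s) ^ (-γ) := Real.rpow_nonneg (by linarith) _
      have hstep : ∀ y ∈ Metric.ball (0:EuclideanSpace ℝ (Fin N)) 1,
          m * t ^ a ≤ Y (x - y) (t - s) := by
        intro y hy
        set τ := t - s with hτdef
        set ξ := (τ ^ (-κ)) • (x - y) with hξdef
        have hξnorm : ‖ξ‖ = τ ^ (-κ) * ‖x - y‖ := hnorm_smul τ hτ0 y
        have hτκpos : 0 < τ ^ (-κ) := Real.rpow_pos_of_pos hτ0 _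
        have hxylb := hxy_lb y hy
        have hxyub := hxy_ub y hy
        have hξpos : 0 < ‖ξ‖ := by
          rw [hξnorm]; exact mul_pos hτκpos (by linarith)
        have hτlb : t/2 ≤ τ := by rw [hτdef]; linarith
        have ht20 : (0:ℝ) < t/2 := by linarith
        have hτκub : τ ^ (-κ) ≤ 2 ^ κ * t ^ (-κ) := by
          have h1 : τ ^ (-κ) ≤ (t/2) ^ (-κ) :=
            Real.rpow_le_rpow_of_nonpos ht20 hτlb (by linarith)
          have h2 : (t/2) ^ (-κ) = 2 ^ κ * t ^ (-κ) := by
            rw [Real.div_rpow ht0.le (by norm_num : (0:ℝ) ≤ 2),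
              Real.rpow_neg (by norm_num : (0:ℝ) ≤ 2), div_eq_mul_inv, inv_inv]
            ring
          rw [h2] at h1
          exact h1
        have hξub : ‖ξ‖ ≤ R := by
          rw [hξnorm]
          calc τ ^ (-κ) * ‖x - y‖ ≤ (2 ^ κ * t ^ (-κ)) * ((ν + 2) * t ^ κ) :=
              mul_le_mul hτκub (hxy_ub y hy) (by linarith) (by positivity)
            _ = 2 ^ κ * (ν + 2) * (t ^ (-κ) * t ^ κ) := by ring
            _ = R := by
              rw [← Real.rpow_add ht0, neg_add_cancel, Real.rpow_zero, mul_one, hRdef]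
        have hGlb : m ≤ G ξ := by
          rcases le_total ‖ξ‖ 1 with hcs | hcs
          · have h1 := (hGin ξ hξpos hcs).1
            have h2 : (1:ℝ) ≤ ‖ξ‖ ^ (4*β - (N:ℝ)) :=
              Real.one_le_rpow_of_pos_of_le_one_of_nonpos hξpos hcs (by linarith)
            have h3 : R ^ (-((N:ℝ) + 2*β)) ≤ 1 :=
              Real.rpow_le_one_of_one_le_of_nonpos hR1 (neg_nonpos.mpr (by positivity))
            rw [hmdef]
            calc c₁ * R ^ (-((N:ℝ) + 2*β)) ≤ c₁ * 1 := mul_le_mul_of_nonneg_left h3 hc₁.le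
              _ = c₁ := mul_one c₁
              _ ≤ c₁ * ‖ξ‖ ^ (4*β - (N:ℝ)) := by
                nth_rewrite 1 [← mul_one c₁]
                exact mul_le_mul_of_nonneg_left h2 hc₁.le
              _ ≤ G ξ := h1
          · have h1 := (hGout ξ hcs).1
            have h2 : R ^ (-((N:ℝ) + 2*β)) ≤ ‖ξ‖ ^ (-((N:ℝ) + 2*β)) :=
              Real.rpow_le_rpow_of_nonpos hξpos hξub (neg_nonpos.mpr (by positivity))
            rw [hmdef]
            calc c₁ * R ^ (-((N:ℝ) + 2*β)) ≤ c₁ * ‖ξ‖ ^ (-((N:ℝ) + 2*β)) :=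
                mul_le_mul_of_nonneg_left h2 hc₁.le
              _ ≤ G ξ := h1
        have hτa : t ^ a ≤ τ ^ a :=
          Real.rpow_le_rpow_of_nonpos hτ0 (by rw [hτdef]; linarith) ha_neg.le
        rw [hY, ← hξdef]
        calc m * t ^ a ≤ m * τ ^ a := mul_le_mul_of_nonneg_left hτa hm0.le
          _ ≤ G ξ * τ ^ a := mul_le_mul_of_nonneg_right hGlb (Real.rpow_nonneg hτ0.le _)
          _ = τ ^ a * G ξ := by ring
      -- integrate the lower bound over y
      have hg_int := hinner_int s hs0 hst
      have hlow_int : ∫ y, Set.indicator (Metric.ball (0:EuclideanSpace ℝ (Fin N)) 1)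
          (fun _ => m * t ^ a * (1+s) ^ (-γ)) y = (m * t ^ a * V) * (1+s) ^ (-γ) := by
        rw [integral_indicator_const _ measurableSet_ball, smul_eq_mul, measureReal_def, ← hVdef]; ring
      rw [← hlow_int]
      refine integral_mono_of_nonneg ?_ hg_int ?_
      · refine Filter.Eventually.of_forall (fun y => Set.indicator_nonneg (fun _ _ => ?_) y)
        exact mul_nonneg (mul_nonneg hm0.le (Real.rpow_nonneg ht0.le _)) hsγ
      · refine Filter.Eventually.of_forall (fun y => ?_)
        show Set.indicator (Metric.ball (0:EuclideanSpace ℝ (Fin N)) 1)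
          (fun _ => m * t ^ a * (1+s) ^ (-γ)) y ≤ Y (x - y) (t - s) * f y s
        by_cases hy : y ∈ Metric.ball (0:EuclideanSpace ℝ (Fin N)) 1
        · rw [Set.indicator_of_mem hy, hf, Set.indicator_of_mem hy, mul_one]
          exact mul_le_mul_of_nonneg_right (hstep y hy) hsγ
        · rw [Set.indicator_of_notMem hy]
          exact mul_nonneg (hYnn _ _ (by linarith)) (hfnn _ _ hs0.le)
    -- assemble the pointwise bound
    rw [hu]
    have step1 : ∫ s in Set.Ioc (0:ℝ) (t/2), ∫ y, Y (x - y) (t - s) * f y s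
        ≤ ∫ s in Set.Ioc (0:ℝ) t, ∫ y, Y (x - y) (t - s) * f y s := by
      refine setIntegral_mono_set hF_int ?_ ?_
      · exact (ae_restrict_iff' measurableSet_Ioc).2 (Filter.Eventually.of_forall
          (fun s hs => integral_nonneg (fun y =>
            mul_nonneg (hYnn _ _ (by linarith [hs.2])) (hfnn _ _ hs.1.le))))
      · exact HasSubset.Subset.eventuallyLE (Set.Ioc_subset_Ioc_right (by linarith))
    have step2 : (m * t ^ a * V) * I ≤
        ∫ s in Set.Ioc (0:ℝ) (t/2), ∫ y, Y (x - y) (t - s) * f y s := by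
      have hc_int : IntegrableOn (fun s : ℝ => (m * t ^ a * V) * (1+s) ^ (-γ))
          (Set.Ioc 0 (t/2)) volume := by
        apply Integrable.const_mul
        have hcont : ContinuousOn (fun s : ℝ => (1+s) ^ (-γ)) (Set.Icc 0 (t/2)) := by
          apply ContinuousOn.rpow_const
          · exact (continuous_const.add continuous_id).continuousOn
          · intro s hs
            exact Or.inl (ne_of_gt (by linarith [hs.1]))
        exact (hcont.integrableOn_Icc).mono_set Set.Ioc_subset_Icc_self
      have heq : (m * t ^ a * V) * I
          = ∫ s in Set.Ioc (0:ℝ) (t/2), (m * t ^ a * V) * (1+s) ^ (-γ) := by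
        rw [hIdef, integral_const_mul]
      rw [heq]
      exact setIntegral_mono_on hc_int
        (hF_int.mono_set (Set.Ioc_subset_Ioc_right (by linarith))) measurableSet_Ioc hlow
    calc m * V * t ^ a * I = (m * t ^ a * V) * I := by ring
      _ ≤ _ := le_trans step2 step1
  -- now the Lp lower bound
  set Aset : Set (EuclideanSpace ℝ (Fin N)) := {x | r₁ ≤ ‖x‖ ∧ ‖x‖ ≤ r₂} with hAdef
  have hA_meas : MeasurableSet Aset := by
    have hA : Aset = (fun x : EuclideanSpace ℝ (Fin N) => ‖x‖) ⁻¹' (Set.Icc r₁ r₂) := rfl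
    rw [hA]
    exact measurable_norm measurableSet_Icc
  have hA_sub : Aset ⊆ {x : EuclideanSpace ℝ (Fin N) | r₁ ≤ ‖x‖} := fun x hx => hx.1
  -- volume lower bound via a ball inside the annulus
  have hAvol : ENNReal.ofReal (W * t ^ (κ * (N:ℝ))) ≤ volume Aset := by
    set x₀ : EuclideanSpace ℝ (Fin N) :=
      EuclideanSpace.single (Classical.arbitrary (Fin N)) ((ν + 1/2) * t ^ κ) with hx₀def
    have hx₀ : ‖x₀‖ = (ν + 1/2) * t ^ κ := by
      rw [hx₀def, EuclideanSpace.norm_single, Real.norm_eq_abs, abs_of_pos (by positivity)]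
    have hball_sub : Metric.ball x₀ (t ^ κ / 2) ⊆ Aset := by
      intro z hz
      rw [Metric.mem_ball, dist_eq_norm] at hz
      have h1 : ‖z‖ - ‖x₀‖ ≤ ‖z - x₀‖ := norm_sub_norm_le z x₀
      have h2 : ‖x₀‖ - ‖z‖ ≤ ‖z - x₀‖ := by
        rw [norm_sub_rev]
        exact norm_sub_norm_le x₀ z
      constructor
      · rw [hr₁def]; rw [hx₀] at h2; linarith
      · rw [hr₂def]; rw [hx₀] at h1; linarith
    refine le_trans ?_ (measure_mono hball_sub)
    rw [Measure.addHaar_ball volume x₀ (show (0:ℝ) ≤ t ^ κ / 2 by positivity), finrank_euclideanSpace_fin]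
    have hBV : volume (Metric.ball (0:EuclideanSpace ℝ (Fin N)) 1) = ENNReal.ofReal V := by
      rw [hVdef, ENNReal.ofReal_toReal hVball_fin.ne]
    rw [hBV, ← ENNReal.ofReal_mul (by positivity)]
    apply ENNReal.ofReal_le_ofReal
    have hrpow : (t ^ κ) ^ (N:ℕ) = t ^ (κ * (N:ℝ)) := by
      rw [← Real.rpow_natCast (t ^ κ) N, ← Real.rpow_mul ht0.le]
    have hexp : (t ^ κ / 2) ^ (N:ℕ) = (2:ℝ)⁻¹ ^ N * t ^ (κ * (N:ℝ)) := by
      rw [div_pow, hrpow, inv_pow]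
      ring
    rw [hexp, hWdef]
    apply le_of_eq
    ring
  have hvolA_pos : 0 < volume Aset :=
    lt_of_lt_of_le (ENNReal.ofReal_pos.mpr (by positivity)) hAvol
  have hrestrne : volume.restrict Aset ≠ 0 := by
    rw [Ne, Measure.restrict_eq_zero]
    exact hvolA_pos.ne'
  set L : ℝ := m * V * t ^ a * I with hLdef
  have hL0 : 0 ≤ L :=
    mul_nonneg (mul_nonneg (mul_nonneg hm0.le hV0.le) (Real.rpow_nonneg ht0.le _)) hI0
  calc ENNReal.ofReal (m * V * W ^ (1/q) * t ^ (α - 1 - α * (N:ℝ) / (2*β) * (1 - 1/q)) * I)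
      ≤ ENNReal.ofReal (L * (W * t ^ (κ * (N:ℝ))) ^ (1/q)) := by
        apply ENNReal.ofReal_le_ofReal
        apply le_of_eq
        have hWt : (W * t ^ (κ * (N:ℝ))) ^ (1/q)
            = W ^ (1/q) * t ^ (κ * (N:ℝ) * (1/q)) := by
          rw [Real.mul_rpow hW0.le (Real.rpow_nonneg ht0.le _), ← Real.rpow_mul ht0.le]
        have hexp : α - 1 - α * (N:ℝ) / (2*β) * (1 - 1/q) = a + κ * (N:ℝ) * (1/q) := by
          rw [hadef, hκdef]; ring
        rw [hexp, Real.rpow_add ht0, hWt, hLdef]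
        ring
    _ = ENNReal.ofReal L * ENNReal.ofReal ((W * t ^ (κ * (N:ℝ))) ^ (1/q)) :=
        ENNReal.ofReal_mul hL0
    _ = ENNReal.ofReal L * (ENNReal.ofReal (W * t ^ (κ * (N:ℝ)))) ^ (1/q) := by
        rw [ENNReal.ofReal_rpow_of_pos (by positivity)]
    _ ≤ ENNReal.ofReal L * (volume Aset) ^ (1/q) :=
        mul_le_mul_right (ENNReal.rpow_le_rpow hAvol hq) _
    _ = eLpNorm (fun _ => L) p (volume.restrict Aset) := by
        rw [eLpNorm_const _ hp0 hrestrne, Measure.restrict_apply_univ,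
          Real.enorm_eq_ofReal hL0, ← hqdef]
    _ ≤ eLpNorm (fun x => u x t) p (volume.restrict Aset) := by
        apply eLpNorm_mono_ae
        rw [ae_restrict_iff' hA_meas]
        refine Filter.Eventually.of_forall (fun x hx => ?_)
        simp only [Real.norm_eq_abs]
        rw [abs_of_nonneg hL0]
        exact le_trans (key x hx.1 hx.2) (le_abs_self _)
    _ ≤ eLpNorm (fun x => u x t) p
          (volume.restrict {x : EuclideanSpace ℝ (Fin N) | r₁ ≤ ‖x‖}) :=
        eLpNorm_mono_measure _ (Measure.restrict_mono hA_sub le_rfl)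
end

section
/- Let p ∈ [1, ∞], γ ∈ ℝ, 0 < ν < μ < ∞, let g : (0,∞) → (0,∞) satisfy g(t) → ∞ and g(t)/t^{α/(2β)} → 0 as t → ∞, and let f(x,t) := (1+t)^{−γ} χ_{B₁}(x), where B₁ is the unit ball of ℝ^N. Then there exist c > 0 and t₀ ≥ 2 such that the mild solution u satisfies, for all t ≥ t₀, ‖u(·,t)‖_{L^p({ν ≤ |x|/g(t) ≤ μ})} ≥ c t^{−γ} g(t)^{2β−N(1−1/p)}. -/
open MeasureTheory Real Set Filter
open scoped ENNReal Pointwise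
set_option maxHeartbeats 1000000 in
theorem intermediate_lower_bound_diffusive
    (N : ℕ) (α β : ℝ)
    (hα : 0 < α ∧ α < 1) (hβ : 0 < β ∧ β ≤ 1) (hN : 4 * β < (N : ℝ))
    (G : EuclideanSpace ℝ (Fin N) → ℝ)
    (hGmeas : Measurable G) (hGnonneg : ∀ ξ, 0 ≤ G ξ)
    (c₁ c₂ : ℝ) (hc₁ : 0 < c₁) (hc₂ : 0 < c₂)
    (hGin : ∀ ξ : EuclideanSpace ℝ (Fin N), 0 < ‖ξ‖ → ‖ξ‖ ≤ 1 →
      c₁ * ‖ξ‖ ^ (4 * β - (N : ℝ)) ≤ G ξ ∧ G ξ ≤ c₂ * ‖ξ‖ ^ (4 * β - (N : ℝ)))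
    (hGout : ∀ ξ : EuclideanSpace ℝ (Fin N), 1 ≤ ‖ξ‖ →
      c₁ * ‖ξ‖ ^ (-((N : ℝ) + 2 * β)) ≤ G ξ ∧ G ξ ≤ c₂ * ‖ξ‖ ^ (-((N : ℝ) + 2 * β)))
    (Y : EuclideanSpace ℝ (Fin N) → ℝ → ℝ)
    (hY : ∀ x t, Y x t = t ^ (α - 1 - α * (N : ℝ) / (2 * β)) * G ((t ^ (-(α / (2 * β)))) • x))
    (γ : ℝ) (f : EuclideanSpace ℝ (Fin N) → ℝ → ℝ)
    (hf : ∀ x t, f x t =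
      (1 + t) ^ (-γ) * Set.indicator (Metric.ball (0 : EuclideanSpace ℝ (Fin N)) 1) (fun _ => (1:ℝ)) x)
    (u : EuclideanSpace ℝ (Fin N) → ℝ → ℝ)
    (hu : ∀ x t, u x t = ∫ s in Set.Ioc (0:ℝ) t, ∫ y, Y (x - y) (t - s) * f y s)
    (p : ℝ≥0∞) (hp : 1 ≤ p)
    (ν μ : ℝ) (hν : 0 < ν) (hνμ : ν < μ)
    (g : ℝ → ℝ) (hgpos : ∀ t : ℝ, 0 < t → 0 < g t)
    (hginf : Tendsto g atTop atTop)
    (hgo : Tendsto (fun t => g t / t ^ (α / (2 * β))) atTop (nhds 0)) :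
    ∃ c : ℝ, 0 < c ∧ ∃ t₀ : ℝ, 2 ≤ t₀ ∧ ∀ t : ℝ, t₀ ≤ t →
      ENNReal.ofReal (c * t ^ (-γ) * g t ^ (2 * β - (N : ℝ) * (1 - 1 / p.toReal))) ≤
        eLpNorm (fun x => u x t) p (volume.restrict {x : EuclideanSpace ℝ (Fin N) | ν ≤ ‖x‖ / g t ∧ ‖x‖ / g t ≤ μ}) := by
  obtain ⟨hα0, hα1⟩ := hα
  obtain ⟨hβ0, hβ1⟩ := hβ
  have h2β : (0:ℝ) < 2 * β := by linarith
  have hNR : (0:ℝ) < N := by linarith [hβ0]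
  have hμ0 : 0 < μ := lt_trans hν hνμ
  have hNnat : 0 < N := by exact_mod_cast hNR
  have hβne : (2*β : ℝ) ≠ 0 := by positivity
  have hαne : α ≠ 0 := ne_of_gt hα0
  set e : ℝ := α / (2 * β) with hedef
  set c0 : ℝ := α - 1 - α * (N : ℝ) / (2 * β) with hc0def
  have he0 : 0 < e := by rw [hedef]; positivity
  have hc0neg : c0 < 0 := by
    rw [hc0def]
    have : 0 < α * (N:ℝ) / (2 * β) := by positivity
    linarith
  have hexpA : c0 + (-e) * (4 * β - (N:ℝ)) = -1 - α := by
    rw [hc0def, hedef]; field_simp; ring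
  have hexpB : c0 + (-e) * (-((N:ℝ) + 2 * β)) = 2 * α - 1 := by
    rw [hc0def, hedef]; field_simp; ring
  -- nonnegativity of Y
  have hYnn : ∀ (w : EuclideanSpace ℝ (Fin N)) (τ : ℝ), 0 ≤ τ → 0 ≤ Y w τ := by
    intro w τ hτ
    rw [hY]
    exact mul_nonneg (Real.rpow_nonneg hτ _) (hGnonneg _)
  -- upper bound for Y
  have hYub : ∀ (w : EuclideanSpace ℝ (Fin N)) (τ : ℝ), 0 ≤ τ → 1 ≤ ‖w‖ →
      Y w τ ≤ c₂ * (1 + τ ^ (2 * α - 1)) := by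
    intro w τ hτ hw
    rcases eq_or_lt_of_le hτ with rfl | hτpos
    · rw [hY, Real.zero_rpow (ne_of_lt hc0neg), zero_mul]
      have := Real.rpow_nonneg (le_refl (0:ℝ)) (2 * α - 1)
      have h2 : (0:ℝ) ≤ 1 + (0:ℝ) ^ (2 * α - 1) := by linarith
      exact mul_nonneg hc₂.le h2
    · have hw0 : (0:ℝ) < ‖w‖ := lt_of_lt_of_le one_pos hw
      have hτe : 0 < τ ^ (-e) := Real.rpow_pos_of_pos hτpos _
      have hnorm : ‖(τ ^ (-e)) • w‖ = τ ^ (-e) * ‖w‖ := by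
        rw [norm_smul, Real.norm_eq_abs, abs_of_pos hτe]
      rw [hY]
      rcases le_or_gt (‖(τ ^ (-e)) • w‖) 1 with hle | hgt
      · -- inner regime : τ ≥ 1
        have hpos : 0 < ‖(τ ^ (-e)) • w‖ := by rw [hnorm]; positivity
        have hG := (hGin _ hpos hle).2
        have hτ1 : 1 ≤ τ := by
          by_contra hcon
          push_neg at hcon
          have h1 : 1 < τ ^ (-e) := by
            rw [Real.one_lt_rpow_iff_of_pos hτpos]
            right; exact ⟨hcon, by linarith⟩
          have : 1 < ‖(τ ^ (-e)) • w‖ := by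
            rw [hnorm]; nlinarith
          linarith
        calc τ ^ c0 * G ((τ ^ (-e)) • w) ≤ τ ^ c0 * (c₂ * ‖(τ ^ (-e)) • w‖ ^ (4 * β - (N:ℝ))) :=
              mul_le_mul_of_nonneg_left hG (Real.rpow_nonneg hτ _)
          _ = c₂ * (‖w‖ ^ (4 * β - (N:ℝ)) * τ ^ (c0 + (-e) * (4 * β - (N:ℝ)))) := by
              rw [hnorm, Real.mul_rpow hτe.le hw0.le, ← Real.rpow_mul hτpos.le,
                Real.rpow_add hτpos]
              ring
          _ ≤ c₂ * (1 * 1) := by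
              have h1 : ‖w‖ ^ (4 * β - (N:ℝ)) ≤ 1 :=
                Real.rpow_le_one_of_one_le_of_nonpos hw (by linarith)
              have h2 : τ ^ (c0 + (-e) * (4 * β - (N:ℝ))) ≤ 1 := by
                rw [hexpA]
                exact Real.rpow_le_one_of_one_le_of_nonpos hτ1 (by linarith)
              have h4 : 0 ≤ τ ^ (c0 + (-e) * (4 * β - (N:ℝ))) := Real.rpow_nonneg hτ _
              exact mul_le_mul_of_nonneg_left (mul_le_mul h1 h2 h4 zero_le_one) hc₂.le
          _ ≤ c₂ * (1 + τ ^ (2 * α - 1)) := by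
              have h5 := Real.rpow_nonneg hτ (2 * α - 1)
              have : (1:ℝ) * 1 ≤ 1 + τ ^ (2 * α - 1) := by linarith
              exact mul_le_mul_of_nonneg_left this hc₂.le
      · -- outer regime
        have hG := (hGout _ hgt.le).2
        calc τ ^ c0 * G ((τ ^ (-e)) • w) ≤ τ ^ c0 * (c₂ * ‖(τ ^ (-e)) • w‖ ^ (-((N:ℝ) + 2*β))) :=
              mul_le_mul_of_nonneg_left hG (Real.rpow_nonneg hτ _)
          _ = c₂ * (‖w‖ ^ (-((N:ℝ) + 2*β)) * τ ^ (c0 + (-e) * (-((N:ℝ) + 2*β)))) := by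
              rw [hnorm, Real.mul_rpow hτe.le hw0.le, ← Real.rpow_mul hτpos.le,
                Real.rpow_add hτpos]
              ring
          _ ≤ c₂ * (1 * τ ^ (2*α - 1)) := by
              rw [hexpB]
              have h1 : ‖w‖ ^ (-((N:ℝ) + 2*β)) ≤ 1 :=
                Real.rpow_le_one_of_one_le_of_nonpos hw (by linarith)
              have h4 : 0 ≤ τ ^ (2*α-1) := Real.rpow_nonneg hτ _
              exact mul_le_mul_of_nonneg_left (mul_le_mul_of_nonneg_right h1 h4) hc₂.le
          _ ≤ c₂ * (1 + τ ^ (2 * α - 1)) := by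
              have h5 := Real.rpow_nonneg hτ (2 * α - 1)
              have : (1:ℝ) * τ ^ (2*α-1) ≤ 1 + τ ^ (2 * α - 1) := by linarith
              exact mul_le_mul_of_nonneg_left this hc₂.le
  -- lower bound for Y
  have hYlb : ∀ (w : EuclideanSpace ℝ (Fin N)) (τ : ℝ), 0 < τ → 0 < ‖w‖ → ‖w‖ ≤ τ ^ e →
      c₁ * ‖w‖ ^ (4 * β - (N:ℝ)) * τ ^ (-1 - α) ≤ Y w τ := by
    intro w τ hτ hw hwe
    have hτe : 0 < τ ^ (-e) := Real.rpow_pos_of_pos hτ _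
    have hnorm : ‖(τ ^ (-e)) • w‖ = τ ^ (-e) * ‖w‖ := by
      rw [norm_smul, Real.norm_eq_abs, abs_of_pos hτe]
    have hpos : 0 < ‖(τ ^ (-e)) • w‖ := by rw [hnorm]; positivity
    have hle : ‖(τ ^ (-e)) • w‖ ≤ 1 := by
      rw [hnorm]
      have h1 : τ ^ (-e) * ‖w‖ ≤ τ ^ (-e) * τ ^ e :=
        mul_le_mul_of_nonneg_left hwe hτe.le
      rw [← Real.rpow_add hτ] at h1
      simpa using h1
    have hG := (hGin _ hpos hle).1
    rw [hY]
    calc c₁ * ‖w‖ ^ (4 * β - (N:ℝ)) * τ ^ (-1 - α)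
        = τ ^ c0 * (c₁ * ‖(τ ^ (-e)) • w‖ ^ (4 * β - (N:ℝ))) := by
          rw [hnorm, Real.mul_rpow hτe.le hw.le, ← Real.rpow_mul hτ.le,
            show (-1 : ℝ) - α = c0 + (-e) * (4 * β - (N:ℝ)) from hexpA.symm,
            Real.rpow_add hτ]
          ring
      _ ≤ τ ^ c0 * G ((τ ^ (-e)) • w) :=
          mul_le_mul_of_nonneg_left hG (Real.rpow_nonneg hτ.le _)
  -- volume of unit ball constant
  set V : ℝ := (volume (Metric.ball (0 : EuclideanSpace ℝ (Fin N)) 1)).toReal with hVdef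
  have hV : 0 < V := ENNReal.toReal_pos (Metric.measure_ball_pos volume _ one_pos).ne'
    measure_ball_lt_top.ne
  -- constant for the (1+s)^{-γ} factor
  set m : ℝ := min ((2:ℝ) ^ (-γ)) ((2:ℝ) ^ γ) with hmdef
  have hm : 0 < m := lt_min (Real.rpow_pos_of_pos two_pos _) (Real.rpow_pos_of_pos two_pos _)
  have hmono : ∀ t s : ℝ, 2 ≤ t → t/2 ≤ s → s ≤ t → m * t ^ (-γ) ≤ (1+s) ^ (-γ) := by
    intro t s ht hs1 hs2
    have ht0 : (0:ℝ) < t := by linarith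
    have hs0 : (0:ℝ) < 1 + s := by linarith
    have hr1 : (1:ℝ)/2 ≤ (1+s)/t := by rw [le_div_iff₀ ht0]; linarith
    have hr2 : (1+s)/t ≤ 2 := by rw [div_le_iff₀ ht0]; linarith
    have hr0 : (0:ℝ) < (1+s)/t := by positivity
    have hm1 : m ≤ ((1+s)/t) ^ (-γ) := by
      rcases le_or_gt 0 γ with h | h
      · exact le_trans (min_le_left _ _) (Real.rpow_le_rpow_of_nonpos hr0 hr2 (by linarith))
      · refine le_trans (min_le_right _ _) ?_
        have h12 : ((1:ℝ)/2) ^ (-γ) = (2:ℝ) ^ γ := by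
          rw [one_div, Real.inv_rpow (by norm_num : (0:ℝ) ≤ 2),
            ← Real.rpow_neg (by norm_num : (0:ℝ) ≤ 2), neg_neg]
        rw [← h12]
        exact Real.rpow_le_rpow (by norm_num) hr1 (by linarith)
    have hmul : ((1+s)/t) ^ (-γ) * t ^ (-γ) = (1+s) ^ (-γ) := by
      rw [← Real.mul_rpow (le_of_lt hr0) ht0.le, div_mul_cancel₀ _ (ne_of_gt ht0)]
    calc m * t ^ (-γ) ≤ ((1+s)/t) ^ (-γ) * t ^ (-γ) :=
          mul_le_mul_of_nonneg_right hm1 (Real.rpow_nonneg ht0.le _)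
      _ = (1+s) ^ (-γ) := hmul
  -- main constant
  set C0 : ℝ := c₁ * (2*μ) ^ (4*β - (N:ℝ)) * (2:ℝ) ^ (-1-α) * (2*μ) ^ (-(2*β)) * m * V
    with hC0def
  have hC0 : 0 < C0 := by
    have h1 := Real.rpow_pos_of_pos (by linarith : (0:ℝ) < 2*μ) (4*β - (N:ℝ))
    have h2 := Real.rpow_pos_of_pos (by norm_num : (0:ℝ) < 2) (-1-α)
    have h3 := Real.rpow_pos_of_pos (by linarith : (0:ℝ) < 2*μ) (-(2*β))
    rw [hC0def]; positivity
  -- choice of t₀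
  set δ : ℝ := (4:ℝ) ^ (-e) / (2*μ) with hδdef
  have hδ : 0 < δ := by
    rw [hδdef]
    have := Real.rpow_pos_of_pos (by norm_num : (0:ℝ) < 4) (-e)
    positivity
  have hev1 := hginf.eventually_ge_atTop (max (2/ν) (1/μ))
  have hev2 := hgo.eventually (eventually_le_nhds hδ)
  obtain ⟨T, hT⟩ := eventually_atTop.mp (hev1.and hev2)
  -- main pointwise lower bound
  have key : ∀ t : ℝ, max T 2 ≤ t → ∀ x : EuclideanSpace ℝ (Fin N),
      ν * g t ≤ ‖x‖ → ‖x‖ ≤ μ * g t → C0 * t ^ (-γ) * g t ^ (2*β - (N:ℝ)) ≤ u x t := by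
    intro t ht x hx1 hx2
    have ht2 : (2:ℝ) ≤ t := le_trans (le_max_right T 2) ht
    have ht0 : (0:ℝ) < t := by linarith
    obtain ⟨hg1, hg2⟩ := hT t (le_trans (le_max_left T 2) ht)
    have hgt0 : 0 < g t := hgpos t ht0
    have hνg : 2 ≤ ν * g t := (div_le_iff₀' hν).mp (le_trans (le_max_left (2/ν) (1/μ)) hg1)
    have hμg : 1 ≤ μ * g t := (div_le_iff₀' hμ0).mp (le_trans (le_max_right (2/ν) (1/μ)) hg1)
    have h2μg : (0:ℝ) < 2*μ*g t := by positivity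
    set R : ℝ := (2*μ*g t) ^ ((2*β)/α) with hRdef
    have hR0 : 0 < R := Real.rpow_pos_of_pos h2μg _
    have hRe : R ^ e = 2*μ*g t := by
      rw [hRdef, ← Real.rpow_mul h2μg.le,
        show (2*β)/α * e = 1 by rw [hedef]; field_simp, Real.rpow_one]
    have hR4 : R ≤ t/4 := by
      have htc : 0 < t ^ e := Real.rpow_pos_of_pos ht0 e
      have h1 : g t ≤ δ * t ^ e := (div_le_iff₀ htc).mp hg2
      have h2 : 2*μ*g t ≤ (4:ℝ) ^ (-e) * t ^ e := by
        calc 2*μ*g t ≤ 2*μ*(δ * t ^ e) := by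
              have := mul_le_mul_of_nonneg_left h1 (by linarith : (0:ℝ) ≤ 2*μ)
              linarith
          _ = (4:ℝ) ^ (-e) * t ^ e := by rw [hδdef]; field_simp
      have h3 : (4:ℝ) ^ (-e) * t ^ e = (t/4) ^ e := by
        rw [Real.div_rpow ht0.le (by norm_num : (0:ℝ) ≤ 4),
          Real.rpow_neg (by norm_num : (0:ℝ) ≤ 4), div_eq_mul_inv]
        ring
      calc R ≤ ((t/4) ^ e) ^ ((2*β)/α) := by
            rw [hRdef]
            refine Real.rpow_le_rpow h2μg.le ?_ (by positivity)
            rw [← h3]; exact h2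
        _ = t/4 := by
            rw [← Real.rpow_mul (by positivity : (0:ℝ) ≤ t/4),
              show e * ((2*β)/α) = 1 by rw [hedef]; field_simp, Real.rpow_one]
    have hIsub : Set.Ioc (t - 2*R) (t - R) ⊆ Set.Ioc (0:ℝ) t := by
      intro s hs
      exact ⟨by linarith [hs.1, hR4, ht2], by linarith [hs.2, hR0.le]⟩
    -- geometric bounds on the ball
    have hwlb : ∀ y ∈ Metric.ball (0 : EuclideanSpace ℝ (Fin N)) 1, 1 ≤ ‖x - y‖ := by
      intro y hy
      have h1 : ‖x‖ - ‖y‖ ≤ ‖x - y‖ := norm_sub_norm_le x y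
      have h2 : ‖y‖ < 1 := mem_ball_zero_iff.mp hy
      have h3 : (2:ℝ) ≤ ‖x‖ := le_trans hνg hx1
      linarith
    have hwub : ∀ y ∈ Metric.ball (0 : EuclideanSpace ℝ (Fin N)) 1, ‖x - y‖ ≤ 2*μ*g t := by
      intro y hy
      have h1 : ‖x - y‖ ≤ ‖x‖ + ‖y‖ := norm_sub_le x y
      have h2 : ‖y‖ < 1 := mem_ball_zero_iff.mp hy
      nlinarith [hx2, hμg]
    -- measurability
    have hYmy : ∀ τ : ℝ, Measurable fun y : EuclideanSpace ℝ (Fin N) => Y (x - y) τ := by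
      intro τ
      simp only [hY]
      exact measurable_const.mul (hGmeas.comp
        (((continuous_const.sub continuous_id).const_smul (τ ^ (-e))).measurable))
    have hΦm : Measurable fun q : ℝ × EuclideanSpace ℝ (Fin N) =>
        Y (x - q.2) (t - q.1) * f q.2 q.1 := by
      simp only [hY, hf]
      refine Measurable.mul (Measurable.mul ?_ ?_) (Measurable.mul ?_ ?_)
      · exact (measurable_const.sub measurable_fst).pow_const _
      · refine hGmeas.comp ?_
        have hsm : Continuous fun q : ℝ × EuclideanSpace ℝ (Fin N) => q.1 • q.2 :=
          continuous_smul
        exact hsm.measurable.comp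
          (((measurable_const.sub measurable_fst).pow_const _).prodMk
            (measurable_const.sub measurable_snd))
      · exact (measurable_const.add measurable_fst).pow_const _
      · exact (measurable_const.indicator measurableSet_ball).comp measurable_snd
    set H : ℝ → ℝ := fun s => ∫ y, Y (x - y) (t - s) * f y s with hHdef
    have hHsm : StronglyMeasurable H := hΦm.stronglyMeasurable.integral_prod_right'
    have hfnn : ∀ (y : EuclideanSpace ℝ (Fin N)) (s : ℝ), 0 ≤ s → 0 ≤ f y s := by
      intro y s hs
      rw [hf]
      exact mul_nonneg (Real.rpow_nonneg (by linarith) _)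
        (Set.indicator_nonneg (fun _ _ => zero_le_one) _)
    have hHnn : ∀ s ∈ Set.Ioc (0:ℝ) t, 0 ≤ H s := by
      intro s hs
      exact integral_nonneg fun y =>
        mul_nonneg (hYnn _ _ (by linarith [hs.2])) (hfnn y s hs.1.le)
    have hre : ∀ s : ℝ, (fun y => Y (x - y) (t - s) * f y s) =
        (Metric.ball (0 : EuclideanSpace ℝ (Fin N)) 1).indicator
          (fun y => Y (x - y) (t - s) * (1 + s) ^ (-γ)) := by
      intro s
      funext y
      rcases Classical.em (y ∈ Metric.ball (0 : EuclideanSpace ℝ (Fin N)) 1) with hy | hy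
      · rw [hf, Set.indicator_of_mem hy, Set.indicator_of_mem hy]; ring
      · rw [hf, Set.indicator_of_notMem hy, Set.indicator_of_notMem hy]; ring
    have hHre : ∀ s : ℝ, H s = ∫ y in Metric.ball (0 : EuclideanSpace ℝ (Fin N)) 1,
        Y (x - y) (t - s) * (1 + s) ^ (-γ) := by
      intro s
      calc H s = ∫ y, Y (x - y) (t - s) * f y s := rfl
        _ = _ := by rw [hre s, integral_indicator measurableSet_ball]
    set K : ℝ := max ((1+t) ^ (-γ)) 1 with hKdef
    have hK0 : 0 < K := lt_of_lt_of_le one_pos (le_max_right _ _)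
    have hKb : ∀ s ∈ Set.Ioc (0:ℝ) t, (1+s) ^ (-γ) ≤ K := by
      intro s hs
      rcases le_or_gt 0 γ with h | h
      · exact le_trans (Real.rpow_le_one_of_one_le_of_nonpos (by linarith [hs.1])
          (by linarith)) (le_max_right _ _)
      · exact le_trans (Real.rpow_le_rpow (by linarith [hs.1]) (by linarith [hs.2])
          (by linarith)) (le_max_left _ _)
    have hib : ∀ s ∈ Set.Ioc (0:ℝ) t, ∀ y ∈ Metric.ball (0 : EuclideanSpace ℝ (Fin N)) 1,
        ‖Y (x - y) (t - s) * (1 + s) ^ (-γ)‖ ≤ c₂ * (1 + (t - s) ^ (2*α - 1)) * K := by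
      intro s hs y hy
      have hτnn : (0:ℝ) ≤ t - s := by linarith [hs.2]
      have hYnn' := hYnn (x - y) (t - s) hτnn
      have h1nn : (0:ℝ) ≤ (1+s) ^ (-γ) := Real.rpow_nonneg (by linarith [hs.1]) _
      rw [Real.norm_eq_abs, abs_of_nonneg (mul_nonneg hYnn' h1nn)]
      have hYb := hYub (x - y) (t - s) hτnn (hwlb y hy)
      have h2 : (0:ℝ) ≤ c₂ * (1 + (t-s) ^ (2*α-1)) := by
        have := Real.rpow_nonneg hτnn (2*α-1)
        nlinarith
      exact mul_le_mul hYb (hKb s hs) h1nn h2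
    have hHub : ∀ s ∈ Set.Ioc (0:ℝ) t, ‖H s‖ ≤ c₂ * K * V * (1 + (t - s) ^ (2*α - 1)) := by
      intro s hs
      rw [hHre s]
      have hbd := norm_setIntegral_le_of_norm_le_const_ae'
        (measure_ball_lt_top : volume (Metric.ball (0 : EuclideanSpace ℝ (Fin N)) 1) < ⊤)
        (ae_of_all _ (hib s hs))
      calc ‖∫ y in Metric.ball (0 : EuclideanSpace ℝ (Fin N)) 1,
            Y (x - y) (t - s) * (1+s) ^ (-γ)‖
          ≤ c₂ * (1 + (t - s) ^ (2*α-1)) * K * V := hbd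
        _ = c₂ * K * V * (1 + (t - s) ^ (2*α-1)) := by ring
    have hb1 : IntegrableOn (fun s => (t - s) ^ (2*α - 1)) (Set.Ioc 0 t) volume := by
      have h1 : IntervalIntegrable (fun z : ℝ => z ^ (2*α - 1)) volume 0 t :=
        intervalIntegral.intervalIntegrable_rpow' (by linarith)
      have h2 := h1.comp_sub_left t
      rw [sub_zero, sub_self] at h2
      exact (intervalIntegrable_iff_integrableOn_Ioc_of_le (by linarith : (0:ℝ) ≤ t)).mp h2.symm
    have hHint : IntegrableOn H (Set.Ioc 0 t) volume := by
      refine Integrable.mono' (g := fun s => c₂*K*V + c₂*K*V * (t - s) ^ (2*α-1)) ?_ ?_ ?_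
      · exact (integrableOn_const measure_Ioc_lt_top.ne).add (hb1.const_mul _)
      · exact hHsm.aestronglyMeasurable.restrict
      · refine (ae_restrict_iff' measurableSet_Ioc).mpr (ae_of_all _ fun s hs => ?_)
        have h := hHub s hs
        have heq : c₂*K*V * (1 + (t - s) ^ (2*α-1)) = c₂*K*V + c₂*K*V*(t-s)^(2*α-1) := by ring
        show ‖H s‖ ≤ c₂*K*V + c₂*K*V * (t - s) ^ (2*α-1)
        linarith
    have hA : ∀ s ∈ Set.Ioc (t - 2*R) (t - R),
        c₁ * (2*μ*g t) ^ (4*β - (N:ℝ)) * (2*R) ^ (-1 - α) * (m * t ^ (-γ)) * V ≤ H s := by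
      intro s hs
      have hsJ : s ∈ Set.Ioc (0:ℝ) t := hIsub hs
      have hτl : R ≤ t - s := by linarith [hs.2]
      have hτu : t - s ≤ 2*R := by linarith [hs.1]
      have hτ0 : 0 < t - s := lt_of_lt_of_le hR0 hτl
      have hpb : ∀ y ∈ Metric.ball (0 : EuclideanSpace ℝ (Fin N)) 1,
          c₁ * (2*μ*g t) ^ (4*β - (N:ℝ)) * (2*R) ^ (-1 - α) * (m * t ^ (-γ)) ≤
            Y (x - y) (t - s) * (1 + s) ^ (-γ) := by
        intro y hy
        have h1 : 1 ≤ ‖x - y‖ := hwlb y hy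
        have h2 : ‖x - y‖ ≤ 2*μ*g t := hwub y hy
        have hwe : ‖x - y‖ ≤ (t - s) ^ e := by
          calc ‖x - y‖ ≤ 2*μ*g t := h2
            _ = R ^ e := hRe.symm
            _ ≤ (t - s) ^ e := Real.rpow_le_rpow hR0.le hτl he0.le
        have hY1 := hYlb (x - y) (t - s) hτ0 (by linarith) hwe
        have hm1 : (2*μ*g t) ^ (4*β - (N:ℝ)) ≤ ‖x - y‖ ^ (4*β - (N:ℝ)) :=
          Real.rpow_le_rpow_of_nonpos (by linarith) h2 (by linarith)
        have hm2 : (2*R) ^ (-1 - α) ≤ (t - s) ^ (-1 - α) :=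
          Real.rpow_le_rpow_of_nonpos hτ0 hτu (by linarith)
        have hmt : m * t ^ (-γ) ≤ (1 + s) ^ (-γ) :=
          hmono t s ht2 (by linarith [hs.1, hR4]) hsJ.2
        have hn1 : (0:ℝ) ≤ ‖x - y‖ ^ (4*β-(N:ℝ)) := Real.rpow_nonneg (by linarith) _
        have hn2 : (0:ℝ) ≤ (t - s) ^ (-1-α) := Real.rpow_nonneg hτ0.le _
        have hstep : c₁ * (2*μ*g t) ^ (4*β-(N:ℝ)) * (2*R) ^ (-1-α) ≤
            c₁ * ‖x - y‖ ^ (4*β-(N:ℝ)) * (t - s) ^ (-1-α) := by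
          refine mul_le_mul (mul_le_mul_of_nonneg_left hm1 hc₁.le) hm2
            (Real.rpow_nonneg (by positivity) _) ?_
          exact mul_nonneg hc₁.le hn1
        calc c₁ * (2*μ*g t) ^ (4*β-(N:ℝ)) * (2*R) ^ (-1-α) * (m * t ^ (-γ))
            ≤ (c₁ * ‖x - y‖ ^ (4*β-(N:ℝ)) * (t - s) ^ (-1-α)) * ((1+s) ^ (-γ)) := by
              refine mul_le_mul hstep hmt
                (mul_nonneg hm.le (Real.rpow_nonneg ht0.le _))
                (mul_nonneg (mul_nonneg hc₁.le hn1) hn2)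
          _ ≤ Y (x - y) (t - s) * (1+s) ^ (-γ) :=
              mul_le_mul_of_nonneg_right hY1 (Real.rpow_nonneg (by linarith [hsJ.1]) _)
      have hψm : Measurable fun y : EuclideanSpace ℝ (Fin N) =>
          Y (x - y) (t - s) * (1 + s) ^ (-γ) := (hYmy (t - s)).mul_const _
      have hψint : IntegrableOn (fun y => Y (x - y) (t - s) * (1 + s) ^ (-γ))
          (Metric.ball (0 : EuclideanSpace ℝ (Fin N)) 1) volume := by
        refine Integrable.mono' (g := fun _ => c₂ * (1 + (t - s) ^ (2*α-1)) * K)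
          (integrableOn_const measure_ball_lt_top.ne)
          hψm.aestronglyMeasurable.restrict ?_
        exact (ae_restrict_iff' measurableSet_ball).mpr (ae_of_all _ (hib s hsJ))
      have hSI := setIntegral_ge_of_const_le_real measurableSet_ball measure_ball_lt_top.ne
        hpb hψint
      rw [hHre s]
      exact hSI
    have hvolI : (volume (Set.Ioc (t - 2*R) (t - R))).toReal = R := by
      rw [Real.volume_Ioc, show t - R - (t - 2*R) = R by ring, ENNReal.toReal_ofReal hR0.le]
    have hout := setIntegral_ge_of_const_le_real measurableSet_Ioc measure_Ioc_lt_top.ne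
      hA (hHint.mono_set hIsub)
    rw [Measure.real, hvolI] at hout
    have hnn' : (0:ℝ→ℝ) ≤ᵐ[volume.restrict (Set.Ioc (0:ℝ) t)] H :=
      (ae_restrict_iff' measurableSet_Ioc).mpr (ae_of_all _ hHnn)
    have hmono2 : ∫ s in Set.Ioc (t-2*R) (t-R), H s ≤ ∫ s in Set.Ioc (0:ℝ) t, H s :=
      setIntegral_mono_set hHint hnn' (HasSubset.Subset.eventuallyLE hIsub)
    -- algebra
    have hRR : R ^ (-1-α) * R = R ^ (-α) := by
      have h := Real.rpow_add hR0 (-1-α) 1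
      rw [Real.rpow_one] at h
      rw [← h]
      congr 1
      ring
    have hRα : R ^ (-α) = (2*μ) ^ (-(2*β)) * g t ^ (-(2*β)) := by
      have h1 : R ^ (-α) = (2*μ*g t) ^ ((2*β)/α * (-α)) := by
        rw [hRdef, ← Real.rpow_mul h2μg.le]
      rw [h1, show (2*β)/α * (-α) = -(2*β) by field_simp,
        Real.mul_rpow (by positivity : (0:ℝ) ≤ 2*μ) hgt0.le]
    have hgg : g t ^ (4*β-(N:ℝ)) * g t ^ (-(2*β)) = g t ^ (2*β - (N:ℝ)) := by
      rw [← Real.rpow_add hgt0]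
      congr 1
      ring
    have halg : c₁ * (2*μ*g t) ^ (4*β-(N:ℝ)) * (2*R) ^ (-1-α) * (m * t ^ (-γ)) * V * R
        = C0 * t ^ (-γ) * g t ^ (2*β - (N:ℝ)) := by
      calc c₁ * (2*μ*g t) ^ (4*β-(N:ℝ)) * (2*R) ^ (-1-α) * (m * t ^ (-γ)) * V * R
          = c₁ * ((2*μ) ^ (4*β-(N:ℝ)) * g t ^ (4*β-(N:ℝ))) *
            ((2:ℝ) ^ (-1-α) * R ^ (-1-α)) * (m * t ^ (-γ)) * V * R := by
            rw [Real.mul_rpow (by positivity : (0:ℝ) ≤ 2*μ) hgt0.le,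
              Real.mul_rpow (by norm_num : (0:ℝ) ≤ 2) hR0.le]
        _ = (c₁ * (2*μ) ^ (4*β-(N:ℝ)) * (2:ℝ) ^ (-1-α) * m * V) * t ^ (-γ) *
            (g t ^ (4*β-(N:ℝ)) * (R ^ (-1-α) * R)) := by ring
        _ = (c₁ * (2*μ) ^ (4*β-(N:ℝ)) * (2:ℝ) ^ (-1-α) * m * V) * t ^ (-γ) *
            (g t ^ (4*β-(N:ℝ)) * ((2*μ) ^ (-(2*β)) * g t ^ (-(2*β)))) := by rw [hRR, hRα]
        _ = (c₁ * (2*μ) ^ (4*β-(N:ℝ)) * (2:ℝ) ^ (-1-α) * (2*μ) ^ (-(2*β)) * m * V) *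
            t ^ (-γ) * (g t ^ (4*β-(N:ℝ)) * g t ^ (-(2*β))) := by ring
        _ = C0 * t ^ (-γ) * g t ^ (2*β - (N:ℝ)) := by rw [hgg, hC0def]
    calc C0 * t ^ (-γ) * g t ^ (2*β - (N:ℝ))
        = (c₁ * (2*μ*g t) ^ (4*β-(N:ℝ)) * (2*R) ^ (-1-α) * (m * t ^ (-γ)) * V) * R := by
          rw [← halg]
      _ ≤ ∫ s in Set.Ioc (t-2*R) (t-R), H s := hout
      _ ≤ ∫ s in Set.Ioc (0:ℝ) t, H s := hmono2
      _ = u x t := (hu x t).symm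
  -- conclusion
  haveI : Nontrivial (EuclideanSpace ℝ (Fin N)) := by
    refine ⟨⟨EuclideanSpace.single (⟨0, hNnat⟩ : Fin N) (1:ℝ), 0, ?_⟩⟩
    intro h
    have h2 := congrArg norm h
    rw [EuclideanSpace.norm_single, norm_zero, norm_one] at h2
    norm_num at h2
  have hfr : Module.finrank ℝ (EuclideanSpace ℝ (Fin N)) = N := finrank_euclideanSpace_fin
  set q : ℝ := 1 / p.toReal with hqdef
  have hq0 : 0 ≤ q := by rw [hqdef]; positivity
  set r₀ : ℝ := (μ - ν)/2 with hr₀def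
  have hr₀ : 0 < r₀ := by rw [hr₀def]; linarith
  have hp0 : p ≠ 0 := (lt_of_lt_of_le zero_lt_one hp).ne'
  refine ⟨C0 * (r₀ ^ N * V) ^ q, ?_, max T 2, le_max_right T 2, ?_⟩
  · have hpos : (0:ℝ) < r₀ ^ N * V := by positivity
    exact mul_pos hC0 (Real.rpow_pos_of_pos hpos q)
  intro t ht
  have ht2 : (2:ℝ) ≤ t := le_trans (le_max_right T 2) ht
  have ht0 : (0:ℝ) < t := by linarith
  have hgt0 : 0 < g t := hgpos t ht0
  set x₀ : EuclideanSpace ℝ (Fin N) :=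
    ((ν+μ)/2 * g t) • EuclideanSpace.single (⟨0, hNnat⟩ : Fin N) (1:ℝ) with hx₀def
  have hx₀n : ‖x₀‖ = (ν+μ)/2 * g t := by
    rw [hx₀def, norm_smul, EuclideanSpace.norm_single, norm_one, mul_one, Real.norm_eq_abs,
      abs_of_pos (by positivity)]
  have hBS : Metric.ball x₀ (r₀ * g t) ⊆
      {x : EuclideanSpace ℝ (Fin N) | ν ≤ ‖x‖ / g t ∧ ‖x‖ / g t ≤ μ} := by
    intro z hz
    rw [Metric.mem_ball, dist_eq_norm] at hz
    rw [hr₀def] at hz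
    have h1 : ‖z‖ - ‖x₀‖ ≤ ‖z - x₀‖ := norm_sub_norm_le z x₀
    have h2 : ‖x₀‖ - ‖z‖ ≤ ‖z - x₀‖ := by
      rw [norm_sub_rev]; exact norm_sub_norm_le x₀ z
    rw [hx₀n] at h1 h2
    refine ⟨?_, ?_⟩
    · rw [le_div_iff₀ hgt0]; nlinarith
    · rw [div_le_iff₀ hgt0]; nlinarith
  have hkey : ∀ z ∈ Metric.ball x₀ (r₀ * g t),
      C0 * t ^ (-γ) * g t ^ (2*β-(N:ℝ)) ≤ u z t := by
    intro z hz
    obtain ⟨hz1, hz2⟩ := hBS hz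
    exact key t ht z ((le_div_iff₀ hgt0).mp hz1) ((div_le_iff₀ hgt0).mp hz2)
  set a : ℝ := C0 * t ^ (-γ) * g t ^ (2*β-(N:ℝ)) with hadef
  have ha0 : 0 < a := by
    rw [hadef]
    exact mul_pos (mul_pos hC0 (Real.rpow_pos_of_pos ht0 _)) (Real.rpow_pos_of_pos hgt0 _)
  have hstep1 : eLpNorm (fun _ : EuclideanSpace ℝ (Fin N) => a) p
      (volume.restrict (Metric.ball x₀ (r₀ * g t)))
      ≤ eLpNorm (fun x => u x t) p (volume.restrict (Metric.ball x₀ (r₀ * g t))) := by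
    refine eLpNorm_mono_ae ?_
    refine (ae_restrict_iff' measurableSet_ball).mpr (ae_of_all _ fun z hz => ?_)
    rw [Real.norm_eq_abs, Real.norm_eq_abs, abs_of_pos ha0]
    exact le_trans (hkey z hz) (le_abs_self _)
  have hstep2 : eLpNorm (fun x => u x t) p (volume.restrict (Metric.ball x₀ (r₀ * g t)))
      ≤ eLpNorm (fun x => u x t) p
        (volume.restrict {x : EuclideanSpace ℝ (Fin N) | ν ≤ ‖x‖ / g t ∧ ‖x‖ / g t ≤ μ}) :=
    eLpNorm_mono_measure _ (Measure.restrict_mono hBS le_rfl)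
  have hμB : volume.restrict (Metric.ball x₀ (r₀ * g t)) ≠ 0 := by
    intro hcon
    rw [Measure.restrict_eq_zero] at hcon
    exact (Metric.measure_ball_pos volume x₀ (by positivity : (0:ℝ) < r₀ * g t)).ne' hcon
  have hconst : eLpNorm (fun _ : EuclideanSpace ℝ (Fin N) => a) p
      (volume.restrict (Metric.ball x₀ (r₀ * g t)))
      = ENNReal.ofReal a * (volume (Metric.ball x₀ (r₀ * g t))) ^ q := by
    rw [eLpNorm_const a hp0 hμB, Measure.restrict_apply_univ, ← hqdef]
    congr 1
    rw [← ofReal_norm, Real.norm_eq_abs, abs_of_pos ha0]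
  have hvolB : volume (Metric.ball x₀ (r₀ * g t)) = ENNReal.ofReal ((r₀ * g t) ^ N * V) := by
    rw [Measure.addHaar_ball volume x₀ (by positivity : (0:ℝ) ≤ r₀ * g t), hfr,
      ENNReal.ofReal_mul (by positivity : (0:ℝ) ≤ (r₀ * g t) ^ N), hVdef,
      ENNReal.ofReal_toReal
        (measure_ball_lt_top : volume (Metric.ball (0 : EuclideanSpace ℝ (Fin N)) 1) < ⊤).ne]
  have hreal : C0 * (r₀ ^ N * V) ^ q * t ^ (-γ) * g t ^ (2*β - (N:ℝ)*(1 - q))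
      = a * ((r₀ * g t) ^ N * V) ^ q := by
    have h1 : ((r₀ * g t) ^ N * V) ^ q = (r₀ ^ N * V) ^ q * g t ^ ((N:ℝ) * q) := by
      rw [mul_pow, show r₀ ^ N * g t ^ N * V = (r₀ ^ N * V) * g t ^ N by ring,
        Real.mul_rpow (by positivity) (by positivity),
        ← Real.rpow_natCast (g t) N, ← Real.rpow_mul hgt0.le]
    rw [h1, hadef, show 2*β - (N:ℝ)*(1 - q) = (2*β - (N:ℝ)) + (N:ℝ)*q by ring,
      Real.rpow_add hgt0]
    ring
  calc ENNReal.ofReal (C0 * (r₀ ^ N * V) ^ q * t ^ (-γ) * g t ^ (2*β - (N:ℝ)*(1-q)))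
      = ENNReal.ofReal (a * ((r₀ * g t) ^ N * V) ^ q) := by rw [hreal]
    _ = ENNReal.ofReal a * ENNReal.ofReal (((r₀ * g t) ^ N * V) ^ q) :=
        ENNReal.ofReal_mul ha0.le
    _ = ENNReal.ofReal a * (ENNReal.ofReal ((r₀ * g t) ^ N * V)) ^ q := by
        rw [ENNReal.ofReal_rpow_of_pos (by positivity)]
    _ = ENNReal.ofReal a * (volume (Metric.ball x₀ (r₀ * g t))) ^ q := by rw [hvolB]
    _ = eLpNorm (fun _ : EuclideanSpace ℝ (Fin N) => a) p
        (volume.restrict (Metric.ball x₀ (r₀ * g t))) := hconst.symm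
    _ ≤ _ := le_trans hstep1 hstep2
end

section
/- Let p ∈ [1, ∞], γ ∈ ℝ, 0 < ν < μ < ∞, let g : (0,∞) → (0,∞) satisfy g(t) → ∞ and g(t)/t^{α/(2β)} → 0 as t → ∞, and let f(x,t) := (1+t)^{−γ} χ_{B₁}(x), where B₁ is the unit ball of ℝ^N. Then there exist c > 0 and t₀ ≥ 2 such that the mild solution u satisfies, for all t ≥ t₀: ‖u(·,t)‖_{L^p({ν ≤ |x|/g(t) ≤ μ})} ≥ c g(t)^{4β−N(1−1/p)} t^{−(γ+α)} if γ < 1; ≥ c g(t)^{4β−N(1−1/p)} t^{−(1+α)} log t if γ = 1; and ≥ c g(t)^{4β−N(1−1/p)} t^{−(1+α)} if γ > 1. -/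
open MeasureTheory Real Set Filter
open scoped ENNReal Pointwise


/-- Lower bound for the kernel in the intermediate region. -/
lemma Ylow_aux {N : ℕ} {α β c₁ R t σ : ℝ} (hα : 0 < α) (hα1 : α < 1) (hβ : 0 < β)
    (hc₁ : 0 < c₁) (hN : 4 * β < (N : ℝ))
    {G : EuclideanSpace ℝ (Fin N) → ℝ}
    (hGin : ∀ ξ : EuclideanSpace ℝ (Fin N), 0 < ‖ξ‖ → ‖ξ‖ ≤ 1 →
      c₁ * ‖ξ‖ ^ (4 * β - (N : ℝ)) ≤ G ξ)
    (ht : 0 < t) (hσ1 : t / 2 ≤ σ) (hσ2 : σ ≤ t) (hR : R ≤ (t / 2) ^ (α / (2 * β)))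
    (z : EuclideanSpace ℝ (Fin N)) (hz : 0 < ‖z‖) (hzR : ‖z‖ ≤ R) :
    c₁ * R ^ (4 * β - (N : ℝ)) * t ^ (-1 - α) ≤
      σ ^ (α - 1 - α * (N : ℝ) / (2 * β)) * G ((σ ^ (-(α / (2 * β)))) • z) := by
  set q := α / (2 * β) with hqdef
  have h2β : 0 < 2 * β := by linarith
  have hq : 0 < q := div_pos hα h2β
  have hσ0 : 0 < σ := lt_of_lt_of_le (by linarith) hσ1
  have hsq : 0 < σ ^ (-q) := Real.rpow_pos_of_pos hσ0 _
  have hRpos : 0 < R := lt_of_lt_of_le hz hzR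
  have hnrm : ‖(σ ^ (-q)) • z‖ = σ ^ (-q) * ‖z‖ := by
    rw [norm_smul, Real.norm_eq_abs, abs_of_pos hsq]
  have hξpos : 0 < ‖(σ ^ (-q)) • z‖ := by rw [hnrm]; positivity
  have hle1 : σ ^ (-q) * R ≤ 1 := by
    calc σ ^ (-q) * R ≤ (t / 2) ^ (-q) * (t / 2) ^ q := by
          apply mul_le_mul _ hR hRpos.le (Real.rpow_nonneg (by linarith) _)
          exact Real.rpow_le_rpow_of_nonpos (by linarith) hσ1 (by linarith)
      _ = 1 := by rw [← Real.rpow_add (by linarith : 0 < t/2), neg_add_cancel, Real.rpow_zero]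
  have hξleR : ‖(σ ^ (-q)) • z‖ ≤ σ ^ (-q) * R := by
    rw [hnrm]; exact mul_le_mul_of_nonneg_left hzR hsq.le
  have hξ1 : ‖(σ ^ (-q)) • z‖ ≤ 1 := hξleR.trans hle1
  have hG := hGin _ hξpos hξ1
  have hbase : (σ ^ (-q) * R) ^ (4 * β - (N:ℝ)) ≤ ‖(σ ^ (-q)) • z‖ ^ (4 * β - (N:ℝ)) :=
    Real.rpow_le_rpow_of_nonpos hξpos hξleR (by linarith)
  have hfac : (σ ^ (-q) * R) ^ (4 * β - (N:ℝ))
      = σ ^ ((-q) * (4 * β - (N:ℝ))) * R ^ (4 * β - (N:ℝ)) := by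
    rw [Real.mul_rpow hsq.le hRpos.le, Real.rpow_mul hσ0.le]
  have hexp : (α - 1 - α * (N:ℝ) / (2 * β)) + (-q) * (4 * β - (N:ℝ)) = -1 - α := by
    rw [hqdef]; field_simp; ring
  have hσa : 0 ≤ σ ^ (α - 1 - α * (N:ℝ) / (2 * β)) := Real.rpow_nonneg hσ0.le _
  calc c₁ * R ^ (4 * β - (N:ℝ)) * t ^ (-1 - α)
      ≤ c₁ * R ^ (4 * β - (N:ℝ)) * σ ^ (-1 - α) := by
        apply mul_le_mul_of_nonneg_left
          (Real.rpow_le_rpow_of_nonpos hσ0 hσ2 (by linarith))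
        positivity
    _ = σ ^ (α - 1 - α * (N:ℝ) / (2 * β)) * (c₁ * (σ ^ (-q) * R) ^ (4 * β - (N:ℝ))) := by
        rw [hfac, ← hexp, Real.rpow_add hσ0]; ring
    _ ≤ σ ^ (α - 1 - α * (N:ℝ) / (2 * β)) * (c₁ * ‖(σ ^ (-q)) • z‖ ^ (4 * β - (N:ℝ))) := by
        apply mul_le_mul_of_nonneg_left (mul_le_mul_of_nonneg_left hbase hc₁.le) hσa
    _ ≤ σ ^ (α - 1 - α * (N:ℝ) / (2 * β)) * G ((σ ^ (-q)) • z) :=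
        mul_le_mul_of_nonneg_left hG hσa

/-- Upper bound for the kernel away from the unit ball. -/
lemma Yupp_aux {N : ℕ} {α β c₂ σ : ℝ} (hα : 0 < α) (hα1 : α < 1) (hβ : 0 < β)
    (hc₂ : 0 < c₂) (hN : 4 * β < (N : ℝ))
    {G : EuclideanSpace ℝ (Fin N) → ℝ}
    (hGin : ∀ ξ : EuclideanSpace ℝ (Fin N), 0 < ‖ξ‖ → ‖ξ‖ ≤ 1 →
      G ξ ≤ c₂ * ‖ξ‖ ^ (4 * β - (N : ℝ)))
    (hGout : ∀ ξ : EuclideanSpace ℝ (Fin N), 1 ≤ ‖ξ‖ →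
      G ξ ≤ c₂ * ‖ξ‖ ^ (-((N : ℝ) + 2 * β)))
    (hσ : 0 < σ) (z : EuclideanSpace ℝ (Fin N)) (hz : 1 ≤ ‖z‖) :
    σ ^ (α - 1 - α * (N : ℝ) / (2 * β)) * G ((σ ^ (-(α / (2 * β)))) • z)
      ≤ c₂ + c₂ * σ ^ (2 * α - 1) := by
  set q := α / (2 * β) with hqdef
  have h2β : 0 < 2 * β := by linarith
  have hq : 0 < q := div_pos hα h2β
  have hsq : 0 < σ ^ (-q) := Real.rpow_pos_of_pos hσ _
  have hzpos : (0:ℝ) < ‖z‖ := lt_of_lt_of_le one_pos hz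
  have hnrm : ‖(σ ^ (-q)) • z‖ = σ ^ (-q) * ‖z‖ := by
    rw [norm_smul, Real.norm_eq_abs, abs_of_pos hsq]
  have hξpos : 0 < ‖(σ ^ (-q)) • z‖ := by rw [hnrm]; positivity
  have hσa : 0 ≤ σ ^ (α - 1 - α * (N:ℝ) / (2 * β)) := Real.rpow_nonneg hσ.le _
  have hfac : ∀ e : ℝ, (σ ^ (-q) * ‖z‖) ^ e = σ ^ ((-q) * e) * ‖z‖ ^ e := by
    intro e
    rw [Real.mul_rpow hsq.le hzpos.le, Real.rpow_mul hσ.le]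
  rcases le_or_gt ‖(σ ^ (-q)) • z‖ 1 with hξ1 | hξ1
  · -- small regime : bound by c₂
    have hσ1 : 1 ≤ σ := by
      by_contra h
      push_neg at h
      have h1 : 1 < σ ^ (-q) := by
        rw [Real.one_lt_rpow_iff_of_pos hσ]
        exact Or.inr ⟨h, by linarith⟩
      have h2 : σ ^ (-q) ≤ σ ^ (-q) * ‖z‖ := le_mul_of_one_le_right hsq.le hz
      rw [hnrm] at hξ1
      linarith
    have hG := hGin _ hξpos hξ1
    have hexp : (α - 1 - α * (N:ℝ) / (2 * β)) + (-q) * (4 * β - (N:ℝ)) = -1 - α := by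
      rw [hqdef]; field_simp; ring
    have key : σ ^ (α - 1 - α * (N:ℝ) / (2 * β)) * (c₂ * ‖(σ ^ (-q)) • z‖ ^ (4 * β - (N:ℝ)))
        ≤ c₂ := by
      rw [hnrm, hfac, show σ ^ (α - 1 - α * (N:ℝ) / (2 * β)) * (c₂ * (σ ^ ((-q) * (4*β-(N:ℝ))) * ‖z‖ ^ (4*β-(N:ℝ)))) = c₂ * ((σ ^ (α - 1 - α * (N:ℝ) / (2 * β)) * σ ^ ((-q) * (4*β-(N:ℝ)))) * ‖z‖ ^ (4*β-(N:ℝ))) by ring,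
        ← Real.rpow_add hσ, hexp]
      have h1 : σ ^ (-1 - α) ≤ 1 := Real.rpow_le_one_of_one_le_of_nonpos hσ1 (by linarith)
      have h2 : ‖z‖ ^ (4*β-(N:ℝ)) ≤ 1 := Real.rpow_le_one_of_one_le_of_nonpos hz (by linarith)
      have h3 : 0 ≤ σ ^ (-1 - α) := Real.rpow_nonneg hσ.le _
      have h4 : 0 ≤ ‖z‖ ^ (4*β-(N:ℝ)) := Real.rpow_nonneg hzpos.le _
      have h5 : σ ^ (-1 - α) * ‖z‖ ^ (4*β-(N:ℝ)) ≤ 1 := mul_le_one₀ h1 h4 h2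
      nlinarith
    have := mul_le_mul_of_nonneg_left hG hσa
    have hpow : 0 ≤ c₂ * σ ^ (2*α-1) := by positivity
    linarith
  · -- large regime
    have hG := hGout _ hξ1.le
    have hexp : (α - 1 - α * (N:ℝ) / (2 * β)) + (-q) * (-((N:ℝ) + 2 * β)) = 2 * α - 1 := by
      rw [hqdef]; field_simp; ring
    have key : σ ^ (α - 1 - α * (N:ℝ) / (2 * β)) * (c₂ * ‖(σ ^ (-q)) • z‖ ^ (-((N:ℝ)+2*β)))
        ≤ c₂ * σ ^ (2*α - 1) := by
      rw [hnrm, hfac, show σ ^ (α - 1 - α * (N:ℝ) / (2 * β)) * (c₂ * (σ ^ ((-q) * (-((N:ℝ)+2*β))) * ‖z‖ ^ (-((N:ℝ)+2*β)))) = c₂ * ((σ ^ (α - 1 - α * (N:ℝ) / (2 * β)) * σ ^ ((-q) * (-((N:ℝ)+2*β)))) * ‖z‖ ^ (-((N:ℝ)+2*β))) by ring,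
        ← Real.rpow_add hσ, hexp]
      have h2 : ‖z‖ ^ (-((N:ℝ)+2*β)) ≤ 1 := Real.rpow_le_one_of_one_le_of_nonpos hz (by linarith)
      have h4 : 0 ≤ ‖z‖ ^ (-((N:ℝ)+2*β)) := Real.rpow_nonneg hzpos.le _
      have h3 : 0 ≤ σ ^ (2*α-1) := Real.rpow_nonneg hσ.le _
      have h5 : σ ^ (2*α-1) * ‖z‖ ^ (-((N:ℝ)+2*β)) ≤ σ ^ (2*α-1) * 1 :=
        mul_le_mul_of_nonneg_left h2 h3
      nlinarith
    have := mul_le_mul_of_nonneg_left hG hσa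
    linarith



lemma Jcont (γ b : ℝ) :
    IntegrableOn (fun s : ℝ => (1 + s) ^ (-γ)) (Ioc 0 b) volume := by
  apply (ContinuousOn.integrableOn_Icc _).mono_set Ioc_subset_Icc_self
  apply ContinuousOn.rpow_const ((continuous_const.add continuous_id).continuousOn)
  intro x hx
  have : (0:ℝ) < 1 + x := by have := hx.1; linarith
  exact Or.inl this.ne'

lemma Jlow_lt {γ t : ℝ} (hγ : γ < 1) (ht : 2 ≤ t) :
    min 1 (4 ^ γ) * t ^ (-γ) * (t / 4) ≤ ∫ s in Ioc (0:ℝ) (t/2), (1 + s) ^ (-γ) := by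
  have htpos : (0:ℝ) < t := by linarith
  have hKnn : 0 ≤ min 1 (4 ^ γ) * t ^ (-γ) := by positivity
  have hsub : Ioc (t/4) (t/2) ⊆ Ioc 0 (t/2) := Ioc_subset_Ioc (by linarith) le_rfl
  have hint : IntegrableOn (Set.indicator (Ioc (t/4) (t/2))
      (fun _ => min 1 (4 ^ γ) * t ^ (-γ))) (Ioc 0 (t/2)) volume :=
    ((integrableOn_const measure_Ioc_lt_top.ne).integrable_indicator
      measurableSet_Ioc).integrableOn
  have hmono : ∫ s in Ioc (0:ℝ) (t/2), Set.indicator (Ioc (t/4) (t/2))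
        (fun _ => min 1 (4 ^ γ) * t ^ (-γ)) s ≤ ∫ s in Ioc (0:ℝ) (t/2), (1 + s) ^ (-γ) := by
    apply setIntegral_mono_on hint (Jcont γ (t/2)) measurableSet_Ioc
    intro s hs
    by_cases hs' : s ∈ Ioc (t/4) (t/2)
    · rw [Set.indicator_of_mem hs']
      rcases le_or_gt 0 γ with hγ0 | hγ0
      · have h1 : t ^ (-γ) ≤ (1 + s) ^ (-γ) := by
          apply Real.rpow_le_rpow_of_nonpos (by linarith [hs.1]) (by linarith [hs.2]) (by linarith)
        calc min 1 (4 ^ γ) * t ^ (-γ) ≤ 1 * t ^ (-γ) := by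
              apply mul_le_mul_of_nonneg_right (min_le_left _ _) (Real.rpow_nonneg htpos.le _)
          _ ≤ (1 + s) ^ (-γ) := by rw [one_mul]; exact h1
      · have h1 : (t/4) ^ (-γ) ≤ (1 + s) ^ (-γ) := by
          apply Real.rpow_le_rpow (by linarith) (by linarith [hs'.1]) (by linarith)
        have h2 : (t/4 : ℝ) ^ (-γ) = 4 ^ γ * t ^ (-γ) := by
          rw [Real.div_rpow htpos.le (by norm_num), Real.rpow_neg (by norm_num : (0:ℝ) ≤ 4)]
          field_simp
        calc min 1 (4 ^ γ) * t ^ (-γ) ≤ 4 ^ γ * t ^ (-γ) := by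
              apply mul_le_mul_of_nonneg_right (min_le_right _ _) (Real.rpow_nonneg htpos.le _)
          _ ≤ (1 + s) ^ (-γ) := by rw [← h2]; exact h1
    · rw [Set.indicator_of_notMem hs']
      exact Real.rpow_nonneg (by linarith [hs.1]) _
  have hval : ∫ s in Ioc (0:ℝ) (t/2), Set.indicator (Ioc (t/4) (t/2))
      (fun _ => min 1 (4 ^ γ) * t ^ (-γ)) s = min 1 (4 ^ γ) * t ^ (-γ) * (t/4) := by
    rw [integral_indicator measurableSet_Ioc, Measure.restrict_restrict measurableSet_Ioc,
      Set.inter_eq_self_of_subset_left hsub, setIntegral_const, Real.volume_real_Ioc_of_le (by linarith), smul_eq_mul,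
      mul_comm]
    ring
  rw [← hval]
  exact hmono

lemma Jlow_gt {γ t : ℝ} (hγ : 1 < γ) (ht : 2 ≤ t) :
    (2:ℝ) ^ (-γ) ≤ ∫ s in Ioc (0:ℝ) (t/2), (1 + s) ^ (-γ) := by
  have hsub : Ioc (0:ℝ) 1 ⊆ Ioc 0 (t/2) := Ioc_subset_Ioc le_rfl (by linarith)
  have hint : IntegrableOn (Set.indicator (Ioc (0:ℝ) 1)
      (fun _ => (2:ℝ) ^ (-γ))) (Ioc 0 (t/2)) volume :=
    ((integrableOn_const measure_Ioc_lt_top.ne).integrable_indicator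
      measurableSet_Ioc).integrableOn
  have hmono : ∫ s in Ioc (0:ℝ) (t/2), Set.indicator (Ioc (0:ℝ) 1)
        (fun _ => (2:ℝ) ^ (-γ)) s ≤ ∫ s in Ioc (0:ℝ) (t/2), (1 + s) ^ (-γ) := by
    apply setIntegral_mono_on hint (Jcont γ (t/2)) measurableSet_Ioc
    intro s hs
    by_cases hs' : s ∈ Ioc (0:ℝ) 1
    · rw [Set.indicator_of_mem hs']
      exact Real.rpow_le_rpow_of_nonpos (by linarith [hs.1]) (by linarith [hs'.2]) (by linarith)
    · rw [Set.indicator_of_notMem hs']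
      exact Real.rpow_nonneg (by linarith [hs.1]) _
  have hval : ∫ s in Ioc (0:ℝ) (t/2), Set.indicator (Ioc (0:ℝ) 1)
      (fun _ => (2:ℝ) ^ (-γ)) s = (2:ℝ) ^ (-γ) := by
    rw [integral_indicator measurableSet_Ioc, Measure.restrict_restrict measurableSet_Ioc,
      Set.inter_eq_self_of_subset_left hsub, setIntegral_const, Real.volume_real_Ioc_of_le (by norm_num), smul_eq_mul]
    norm_num
  rw [← hval]
  exact hmono

lemma Jlow_eq {t : ℝ} (ht : 4 ≤ t) :
    (1/4) * Real.log t ≤ ∫ s in Ioc (0:ℝ) (t/2), (1 + s) ^ (-(1:ℝ)) := by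
  have ht2 : (2:ℝ) ≤ t/2 := by linarith
  have hint2 : IntegrableOn (fun s : ℝ => (2*s)⁻¹) (Ioc 1 (t/2)) volume := by
    apply (ContinuousOn.integrableOn_Icc _).mono_set Ioc_subset_Icc_self
    apply ContinuousOn.inv₀ (continuous_const.mul continuous_id).continuousOn
    intro x hx
    have : (1:ℝ) ≤ x := hx.1
    show (2:ℝ) * x ≠ 0
    positivity
  have hsub : Ioc (1:ℝ) (t/2) ⊆ Ioc 0 (t/2) := Ioc_subset_Ioc (by norm_num) le_rfl
  have hint : IntegrableOn (Set.indicator (Ioc (1:ℝ) (t/2))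
      (fun s => (2*s)⁻¹)) (Ioc 0 (t/2)) volume :=
    (hint2.integrable_indicator measurableSet_Ioc).integrableOn
  have hmono : ∫ s in Ioc (0:ℝ) (t/2), Set.indicator (Ioc (1:ℝ) (t/2))
        (fun s => (2*s)⁻¹) s ≤ ∫ s in Ioc (0:ℝ) (t/2), (1 + s) ^ (-(1:ℝ)) := by
    apply setIntegral_mono_on hint (Jcont 1 (t/2)) measurableSet_Ioc
    intro s hs
    by_cases hs' : s ∈ Ioc (1:ℝ) (t/2)
    · rw [Set.indicator_of_mem hs', Real.rpow_neg_one]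
      have h1 : (1:ℝ) < s := hs'.1
      apply inv_anti₀ (by linarith) (by linarith)
    · rw [Set.indicator_of_notMem hs']
      exact Real.rpow_nonneg (by linarith [hs.1]) _
  have hval : ∫ s in Ioc (0:ℝ) (t/2), Set.indicator (Ioc (1:ℝ) (t/2))
      (fun s => (2*s)⁻¹) s = (1/2) * Real.log (t/2) := by
    rw [integral_indicator measurableSet_Ioc, Measure.restrict_restrict measurableSet_Ioc,
      Set.inter_eq_self_of_subset_left hsub]
    have h1 : ∫ s in Ioc (1:ℝ) (t/2), (2*s)⁻¹ = ∫ s in Ioc (1:ℝ) (t/2), (1/2) * s⁻¹ := by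
      apply setIntegral_congr_fun measurableSet_Ioc
      intro x hx
      have : (1:ℝ) ≤ x := hx.1.le
      field_simp
    rw [h1, MeasureTheory.integral_const_mul]
    congr 1
    rw [← intervalIntegral.integral_of_le (by linarith : (1:ℝ) ≤ t/2)]
    rw [integral_inv (by intro h; have := h.1; simp [Set.uIcc_of_le (by linarith : (1:ℝ) ≤ t/2)] at h; linarith [h.1])]
    simp
  refine le_trans ?_ (hval ▸ hmono)
  have hlog2 : Real.log 4 ≤ Real.log t := Real.log_le_log (by norm_num) ht
  have h4 : Real.log 4 = 2 * Real.log 2 := by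
    rw [show (4:ℝ) = 2^2 by norm_num, Real.log_pow]; push_cast; ring
  have hdiv : Real.log (t/2) = Real.log t - Real.log 2 :=
    Real.log_div (by linarith : t ≠ 0) (by norm_num)
  rw [hdiv]
  nlinarith [Real.log_nonneg (by linarith : (1:ℝ) ≤ t)]


section KEY
variable {N : ℕ} {α β c₁ c₂ γ ν μ : ℝ}
variable {G : EuclideanSpace ℝ (Fin N) → ℝ}
variable {Y : EuclideanSpace ℝ (Fin N) → ℝ → ℝ}
variable {f : EuclideanSpace ℝ (Fin N) → ℝ → ℝ}
variable {u : EuclideanSpace ℝ (Fin N) → ℝ → ℝ}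

lemma key_pointwise
    (hα0 : 0 < α) (hα1 : α < 1) (hβ0 : 0 < β) (hN : 4 * β < (N : ℝ))
    (hGmeas : Measurable G) (hGnonneg : ∀ ξ, 0 ≤ G ξ)
    (hc₁ : 0 < c₁) (hc₂ : 0 < c₂)
    (hGin : ∀ ξ : EuclideanSpace ℝ (Fin N), 0 < ‖ξ‖ → ‖ξ‖ ≤ 1 →
      c₁ * ‖ξ‖ ^ (4 * β - (N : ℝ)) ≤ G ξ ∧ G ξ ≤ c₂ * ‖ξ‖ ^ (4 * β - (N : ℝ)))
    (hGout : ∀ ξ : EuclideanSpace ℝ (Fin N), 1 ≤ ‖ξ‖ →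
      c₁ * ‖ξ‖ ^ (-((N : ℝ) + 2 * β)) ≤ G ξ ∧ G ξ ≤ c₂ * ‖ξ‖ ^ (-((N : ℝ) + 2 * β)))
    (hY : ∀ x t, Y x t = t ^ (α - 1 - α * (N : ℝ) / (2 * β)) * G ((t ^ (-(α / (2 * β)))) • x))
    (hf : ∀ x t, f x t =
      (1 + t) ^ (-γ) * Set.indicator (Metric.ball (0 : EuclideanSpace ℝ (Fin N)) 1)
        (fun _ => (1:ℝ)) x)
    (hu : ∀ x t, u x t = ∫ s in Set.Ioc (0:ℝ) t, ∫ y, Y (x - y) (t - s) * f y s)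
    (hν : 0 < ν) (hνμ : ν < μ)
    (t gt : ℝ) (ht : 4 ≤ t) (hgt1 : 1 ≤ gt) (hgt2 : 2 ≤ ν * gt)
    (hgR : (μ + 1) * gt ≤ (t / 2) ^ (α / (2 * β)))
    (x : EuclideanSpace ℝ (Fin N)) (hx1 : ν * gt ≤ ‖x‖) (hx2 : ‖x‖ ≤ μ * gt) :
    (volume (Metric.ball (0 : EuclideanSpace ℝ (Fin N)) 1)).toReal *
        (c₁ * ((μ + 1) * gt) ^ (4 * β - (N : ℝ)) * t ^ (-1 - α)) *
        (∫ s in Ioc (0:ℝ) (t/2), (1 + s) ^ (-γ)) ≤ u x t := by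
  have htpos : (0:ℝ) < t := by linarith
  have h2β : (0:ℝ) < 2 * β := by linarith
  have hNpos : (0:ℝ) < N := by linarith
  have ha_ne : (α - 1 - α * (N:ℝ) / (2 * β)) ≠ 0 := by
    have h1 : 0 < α * (N:ℝ) / (2 * β) := by positivity
    intro h; nlinarith
  set B := Metric.ball (0 : EuclideanSpace ℝ (Fin N)) 1 with hB
  set κ₁ := (volume B).toReal with hκ₁
  set Λ := c₁ * ((μ + 1) * gt) ^ (4 * β - (N:ℝ)) * t ^ (-1 - α) with hΛ
  have hΛpos : 0 < Λ := by
    have : (0:ℝ) < (μ + 1) * gt := by nlinarith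
    positivity
  have hκnn : 0 ≤ κ₁ := ENNReal.toReal_nonneg
  have hr_lb : ∀ y ∈ B, 1 ≤ ‖x - y‖ := by
    intro y hy
    have h1 : ‖y‖ < 1 := mem_ball_zero_iff.1 hy
    have h2 := norm_sub_norm_le x y
    linarith
  have hr_ub : ∀ y ∈ B, ‖x - y‖ ≤ (μ + 1) * gt := by
    intro y hy
    have h1 : ‖y‖ < 1 := mem_ball_zero_iff.1 hy
    have h2 := norm_sub_le x y
    nlinarith
  have hYnn : ∀ (z : EuclideanSpace ℝ (Fin N)) (σ' : ℝ), 0 ≤ σ' → 0 ≤ Y z σ' := by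
    intro z σ' h
    rw [hY]
    exact mul_nonneg (Real.rpow_nonneg h _) (hGnonneg _)
  have hfnn : ∀ (y : EuclideanSpace ℝ (Fin N)) (s : ℝ), 0 ≤ s → 0 ≤ f y s := by
    intro y s hs
    rw [hf]
    exact mul_nonneg (Real.rpow_nonneg (by linarith) _)
      (Set.indicator_nonneg (fun _ _ => zero_le_one) _)
  have hWnn : ∀ s ∈ Ioc (0:ℝ) t, ∀ y, 0 ≤ Y (x - y) (t - s) * f y s := by
    intro s hs y
    exact mul_nonneg (hYnn _ _ (by linarith [hs.2])) (hfnn _ _ hs.1.le)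
  have hWeq : ∀ s : ℝ, (fun y => Y (x - y) (t - s) * f y s)
      = Set.indicator B (fun y => Y (x - y) (t - s) * (1 + s) ^ (-γ)) := by
    intro s; funext y
    by_cases hy : y ∈ B
    · rw [Set.indicator_of_mem hy, hf, Set.indicator_of_mem hy]; ring
    · rw [Set.indicator_of_notMem hy, hf, Set.indicator_of_notMem hy]; ring
  have hYmeas : ∀ σ' : ℝ, Measurable (fun y : EuclideanSpace ℝ (Fin N) => Y (x - y) σ') := by
    intro σ'
    simp only [hY]
    exact (hGmeas.comp (by fun_prop)).const_mul _
  have hWint : ∀ s ∈ Ioc (0:ℝ) t, Integrable (fun y => Y (x - y) (t - s) * f y s) := by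
    intro s hs
    rcases eq_or_lt_of_le hs.2 with heq | hst
    · have hts : t - s = 0 := by rw [heq]; ring
      have hzero : (fun y => Y (x - y) (t - s) * f y s) = fun _ => (0:ℝ) := by
        funext y
        rw [hts, hY, Real.zero_rpow ha_ne, zero_mul, zero_mul]
      rw [hzero]
      exact integrable_zero _ _ _
    · rw [hWeq]
      apply IntegrableOn.integrable_indicator _ measurableSet_ball
      apply Measure.integrableOn_of_bounded
        (M := (c₂ + c₂ * (t - s) ^ (2 * α - 1)) * (1 + s) ^ (-γ)) measure_ball_lt_top.ne
      · exact (((hYmeas (t - s)).mul_const _)).aestronglyMeasurable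
      · filter_upwards [ae_restrict_mem measurableSet_ball] with y hy
        have h1 : 1 ≤ ‖x - y‖ := hr_lb y hy
        have hσ : 0 < t - s := sub_pos.2 hst
        have hup : Y (x - y) (t - s) ≤ c₂ + c₂ * (t - s) ^ (2 * α - 1) := by
          rw [hY]
          exact Yupp_aux hα0 hα1 hβ0 hc₂ hN (fun ξ a b => (hGin ξ a b).2)
            (fun ξ a => (hGout ξ a).2) hσ _ h1
        rw [Real.norm_eq_abs, abs_of_nonneg (mul_nonneg (hYnn _ _ hσ.le)
          (Real.rpow_nonneg (by linarith [hs.1]) _))]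
        exact mul_le_mul_of_nonneg_right hup (Real.rpow_nonneg (by linarith [hs.1]) _)
  set F : ℝ → ℝ := fun s => ∫ y, Y (x - y) (t - s) * f y s with hF
  have hFm : StronglyMeasurable F := by
    apply StronglyMeasurable.integral_prod_right
      (f := fun (s : ℝ) (y : EuclideanSpace ℝ (Fin N)) => Y (x - y) (t - s) * f y s)
    apply Measurable.stronglyMeasurable
    have huncurry : Function.uncurry (fun (s : ℝ) (y : EuclideanSpace ℝ (Fin N)) =>
        Y (x - y) (t - s) * f y s) =
        fun p : ℝ × EuclideanSpace ℝ (Fin N) =>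
          ((t - p.1) ^ (α - 1 - α * (N:ℝ) / (2 * β)) *
            G (((t - p.1) ^ (-(α / (2 * β)))) • (x - p.2))) *
          ((1 + p.1) ^ (-γ) * Set.indicator B (fun _ => (1:ℝ)) p.2) := by
      funext p
      simp only [Function.uncurry, hY, hf]
    rw [huncurry]
    apply Measurable.mul
    · exact Measurable.mul (by fun_prop) (hGmeas.comp (by fun_prop))
    · exact Measurable.mul (by fun_prop)
        ((measurable_const.indicator measurableSet_ball).comp measurable_snd)
  have hFnn : ∀ s ∈ Ioc (0:ℝ) t, 0 ≤ F s := fun s hs => integral_nonneg (fun y => hWnn s hs y)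
  set Γ := max 1 ((1 + t) ^ (-γ)) with hΓ
  have hΓnn : 0 ≤ Γ := le_trans zero_le_one (le_max_left _ _)
  have hΓbd : ∀ s ∈ Ioc (0:ℝ) t, (1 + s) ^ (-γ) ≤ Γ := by
    intro s hs
    rcases le_or_gt 0 γ with h | h
    · exact le_trans (Real.rpow_le_one_of_one_le_of_nonpos
        (by linarith [hs.1]) (by linarith)) (le_max_left _ _)
    · exact le_trans (Real.rpow_le_rpow (by linarith [hs.1])
        (by linarith [hs.2]) (by linarith)) (le_max_right _ _)
  have hFub : ∀ s ∈ Ioc (0:ℝ) t, F s ≤ κ₁ * (Γ * (c₂ + c₂ * (t - s) ^ (2 * α - 1))) := by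
    intro s hs
    have hrhs_nn : 0 ≤ c₂ + c₂ * (t - s) ^ (2 * α - 1) :=
      add_nonneg hc₂.le (mul_nonneg hc₂.le (Real.rpow_nonneg (by linarith [hs.2]) _))
    rcases eq_or_lt_of_le hs.2 with heq | hst
    · have hts : t - s = 0 := by rw [heq]; ring
      have hzero : (fun y => Y (x - y) (t - s) * f y s) = fun _ => (0:ℝ) := by
        funext y
        rw [hts, hY, Real.zero_rpow ha_ne, zero_mul, zero_mul]
      have hF0 : F s = 0 := by rw [hF]; simp only [hzero]; exact integral_zero _ _
      rw [hF0]
      positivity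
    · have hσ : 0 < t - s := sub_pos.2 hst
      have step : F s ≤ ∫ y, Set.indicator B
          (fun _ => Γ * (c₂ + c₂ * (t - s) ^ (2 * α - 1))) y := by
        rw [hF]
        apply integral_mono (hWint s hs)
          ((integrableOn_const measure_ball_lt_top.ne).integrable_indicator
            measurableSet_ball)
        intro y
        show Y (x - y) (t - s) * f y s ≤ _
        by_cases hy : y ∈ B
        · rw [hf, Set.indicator_of_mem hy, Set.indicator_of_mem hy]
          have hup : Y (x - y) (t - s) ≤ c₂ + c₂ * (t - s) ^ (2 * α - 1) := by
            rw [hY]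
            exact Yupp_aux hα0 hα1 hβ0 hc₂ hN (fun ξ a b => (hGin ξ a b).2)
              (fun ξ a => (hGout ξ a).2) hσ _ (hr_lb y hy)
          have h1nn : 0 ≤ (1 + s) ^ (-γ) := Real.rpow_nonneg (by linarith [hs.1]) _
          calc Y (x - y) (t - s) * ((1 + s) ^ (-γ) * 1)
              = Y (x - y) (t - s) * (1 + s) ^ (-γ) := by ring
            _ ≤ (c₂ + c₂ * (t - s) ^ (2 * α - 1)) * (1 + s) ^ (-γ) :=
                mul_le_mul_of_nonneg_right hup h1nn
            _ ≤ (c₂ + c₂ * (t - s) ^ (2 * α - 1)) * Γ :=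
                mul_le_mul_of_nonneg_left (hΓbd s hs) hrhs_nn
            _ = Γ * (c₂ + c₂ * (t - s) ^ (2 * α - 1)) := by ring
        · rw [hf, Set.indicator_of_notMem hy, Set.indicator_of_notMem hy, mul_zero, mul_zero]
      refine step.trans (le_of_eq ?_)
      rw [integral_indicator measurableSet_ball, setIntegral_const, smul_eq_mul]
      exact rfl
  have hIrpow : IntegrableOn (fun s => (t - s) ^ (2 * α - 1)) (Ioc 0 t) volume := by
    have h1 : IntervalIntegrable (fun x : ℝ => x ^ (2 * α - 1)) volume 0 t :=
      intervalIntegral.intervalIntegrable_rpow' (by linarith)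
    have h2 := h1.comp_sub_left t
    rw [sub_zero, sub_self] at h2
    have h3 := h2.symm
    rwa [intervalIntegrable_iff, uIoc_of_le htpos.le] at h3
  have hFint : IntegrableOn F (Ioc 0 t) volume := by
    apply Integrable.mono'
      (g := fun s => κ₁ * Γ * c₂ + κ₁ * Γ * c₂ * (t - s) ^ (2 * α - 1))
    · exact (integrableOn_const measure_Ioc_lt_top.ne).add (hIrpow.const_mul _)
    · exact hFm.aestronglyMeasurable.restrict
    · filter_upwards [ae_restrict_mem measurableSet_Ioc] with s hs
      rw [Real.norm_eq_abs, abs_of_nonneg (hFnn s hs)]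
      calc F s ≤ κ₁ * (Γ * (c₂ + c₂ * (t - s) ^ (2 * α - 1))) := hFub s hs
        _ = κ₁ * Γ * c₂ + κ₁ * Γ * c₂ * (t - s) ^ (2 * α - 1) := by ring
  have hFlb : ∀ s ∈ Ioc (0:ℝ) (t/2), κ₁ * Λ * (1 + s) ^ (-γ) ≤ F s := by
    intro s hs
    have hs' : s ∈ Ioc (0:ℝ) t := ⟨hs.1, hs.2.trans (by linarith)⟩
    have hσ1 : t / 2 ≤ t - s := by linarith [hs.2]
    have hσ2 : t - s ≤ t := by linarith [hs.1]
    have h1nn : 0 ≤ (1 + s) ^ (-γ) := Real.rpow_nonneg (by linarith [hs.1]) _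
    have hval : ∫ y, Set.indicator B (fun _ => Λ * (1 + s) ^ (-γ)) y
        = κ₁ * Λ * (1 + s) ^ (-γ) := by
      rw [integral_indicator measurableSet_ball, setIntegral_const, smul_eq_mul]
      exact (mul_assoc _ _ _).symm
    rw [← hval, hF]
    apply integral_mono
      ((integrableOn_const measure_ball_lt_top.ne).integrable_indicator
        measurableSet_ball)
      (hWint s hs')
    intro y
    show _ ≤ Y (x - y) (t - s) * f y s
    by_cases hy : y ∈ B
    · rw [Set.indicator_of_mem hy, hf, Set.indicator_of_mem hy]
      have hz : 0 < ‖x - y‖ := lt_of_lt_of_le one_pos (hr_lb y hy)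
      have hYl : Λ ≤ Y (x - y) (t - s) := by
        rw [hY, hΛ]
        exact Ylow_aux hα0 hα1 hβ0 hc₁ hN (fun ξ a b => (hGin ξ a b).1)
          htpos hσ1 hσ2 hgR _ hz (hr_ub y hy)
      calc Λ * (1 + s) ^ (-γ) ≤ Y (x - y) (t - s) * (1 + s) ^ (-γ) :=
            mul_le_mul_of_nonneg_right hYl h1nn
        _ = Y (x - y) (t - s) * ((1 + s) ^ (-γ) * 1) := by ring
    · rw [Set.indicator_of_notMem hy]
      exact hWnn s hs' y
  -- assemble
  have hindint : IntegrableOn (Set.indicator (Ioc (0:ℝ) (t/2))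
      (fun s => κ₁ * Λ * (1 + s) ^ (-γ))) (Ioc 0 t) volume :=
    (IntegrableOn.integrable_indicator
      (show IntegrableOn (fun s => κ₁ * Λ * (1 + s) ^ (-γ)) (Ioc 0 (t/2)) volume from
        (Jcont γ (t/2)).const_mul (κ₁ * Λ)) measurableSet_Ioc).integrableOn
  have hmain : ∫ s in Ioc (0:ℝ) t, Set.indicator (Ioc (0:ℝ) (t/2))
      (fun s => κ₁ * Λ * (1 + s) ^ (-γ)) s ≤ ∫ s in Ioc (0:ℝ) t, F s := by
    apply setIntegral_mono_on hindint hFint measurableSet_Ioc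
    intro s hs
    by_cases hs' : s ∈ Ioc (0:ℝ) (t/2)
    · rw [Set.indicator_of_mem hs']
      exact hFlb s hs'
    · rw [Set.indicator_of_notMem hs']
      exact hFnn s hs
  have hvalue : ∫ s in Ioc (0:ℝ) t, Set.indicator (Ioc (0:ℝ) (t/2))
      (fun s => κ₁ * Λ * (1 + s) ^ (-γ)) s
      = κ₁ * Λ * ∫ s in Ioc (0:ℝ) (t/2), (1 + s) ^ (-γ) := by
    rw [integral_indicator measurableSet_Ioc, Measure.restrict_restrict measurableSet_Ioc,
      Set.inter_eq_self_of_subset_left (Ioc_subset_Ioc le_rfl (by linarith)),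
      MeasureTheory.integral_const_mul]
  rw [hu]
  calc κ₁ * Λ * ∫ s in Ioc (0:ℝ) (t/2), (1 + s) ^ (-γ)
      = ∫ s in Ioc (0:ℝ) t, Set.indicator (Ioc (0:ℝ) (t/2))
          (fun s => κ₁ * Λ * (1 + s) ^ (-γ)) s := hvalue.symm
    _ ≤ ∫ s in Ioc (0:ℝ) t, F s := hmain

end KEY



lemma elp_low {N : ℕ} (hN0 : 0 < N) (p : ℝ≥0∞) (hp : 1 ≤ p)
    (v : EuclideanSpace ℝ (Fin N) → ℝ) (ρ₁ ρ₂ L : ℝ)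
    (h1 : 0 < ρ₁) (h12 : ρ₁ < ρ₂) (hL : 0 ≤ L)
    (hv : ∀ x : EuclideanSpace ℝ (Fin N), ρ₁ ≤ ‖x‖ → ‖x‖ ≤ ρ₂ → L ≤ v x) :
    ENNReal.ofReal (L * ((ρ₂ ^ N - ρ₁ ^ N) *
        (volume (Metric.ball (0 : EuclideanSpace ℝ (Fin N)) 1)).toReal) ^ (1 / p.toReal)) ≤
      eLpNorm v p (volume.restrict {x : EuclideanSpace ℝ (Fin N) | ρ₁ ≤ ‖x‖ ∧ ‖x‖ ≤ ρ₂}) := by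
  set A : Set (EuclideanSpace ℝ (Fin N)) := {x | ρ₁ ≤ ‖x‖ ∧ ‖x‖ ≤ ρ₂} with hA
  have hAmeas : MeasurableSet A := by
    have : A = (fun x : EuclideanSpace ℝ (Fin N) => ‖x‖) ⁻¹' (Icc ρ₁ ρ₂) := rfl
    rw [this]
    exact measurable_norm measurableSet_Icc
  set κB := volume (Metric.ball (0 : EuclideanSpace ℝ (Fin N)) 1) with hκB
  have hκpos : 0 < κB := Metric.measure_ball_pos volume 0 one_pos
  have hκlt : κB < ⊤ := measure_ball_lt_top
  have hpow : ρ₁ ^ N < ρ₂ ^ N := pow_lt_pow_left₀ h12 h1.le hN0.ne'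
  have hsub : Metric.closedBall (0 : EuclideanSpace ℝ (Fin N)) ρ₂ \
      Metric.closedBall 0 ρ₁ ⊆ A := by
    rintro x ⟨hx1, hx2⟩
    rw [Metric.mem_closedBall, dist_zero_right] at hx1 hx2
    exact ⟨le_of_lt (lt_of_not_ge hx2), hx1⟩
  have hvol : ENNReal.ofReal (ρ₂ ^ N - ρ₁ ^ N) * κB ≤ volume A := by
    refine le_trans (le_of_eq ?_) (measure_mono hsub)
    rw [measure_diff (Metric.closedBall_subset_closedBall h12.le)
        measurableSet_closedBall.nullMeasurableSet measure_closedBall_lt_top.ne,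
      Measure.addHaar_closedBall _ _ (by linarith : (0:ℝ) ≤ ρ₂),
      Measure.addHaar_closedBall _ _ h1.le, finrank_euclideanSpace_fin,
      ENNReal.ofReal_sub _ (pow_nonneg h1.le N),
      ENNReal.sub_mul (fun _ _ => hκlt.ne)]
  have hApos : volume A ≠ 0 := by
    have h0 : 0 < ENNReal.ofReal (ρ₂ ^ N - ρ₁ ^ N) * κB :=
      ENNReal.mul_pos (by simp [ENNReal.ofReal_pos]; linarith) hκpos.ne'
    exact (lt_of_lt_of_le h0 hvol).ne'
  have hp0 : p ≠ 0 := (lt_of_lt_of_le zero_lt_one hp).ne'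
  have hrestr : volume.restrict A ≠ 0 := by rwa [Ne, Measure.restrict_eq_zero]
  have hXpos : 0 < (ρ₂ ^ N - ρ₁ ^ N) * κB.toReal :=
    mul_pos (by linarith) (ENNReal.toReal_pos hκpos.ne' hκlt.ne)
  have hexp0 : (0:ℝ) ≤ 1 / p.toReal := by positivity
  calc ENNReal.ofReal (L * ((ρ₂ ^ N - ρ₁ ^ N) * κB.toReal) ^ (1 / p.toReal))
      = ENNReal.ofReal L *
        ENNReal.ofReal (((ρ₂ ^ N - ρ₁ ^ N) * κB.toReal) ^ (1 / p.toReal)) :=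
        ENNReal.ofReal_mul hL
    _ = ENNReal.ofReal L * (ENNReal.ofReal (ρ₂ ^ N - ρ₁ ^ N) * κB) ^ (1 / p.toReal) := by
        rw [← ENNReal.ofReal_rpow_of_pos hXpos,
          ENNReal.ofReal_mul (by linarith : (0:ℝ) ≤ ρ₂ ^ N - ρ₁ ^ N),
          ENNReal.ofReal_toReal hκlt.ne]
    _ ≤ ENNReal.ofReal L * (volume A) ^ (1 / p.toReal) :=
        mul_le_mul_right (ENNReal.rpow_le_rpow hvol hexp0) _
    _ = ‖L‖ₑ * ((volume.restrict A) univ) ^ (1 / p.toReal) := by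
        rw [Real.enorm_eq_ofReal hL, Measure.restrict_apply_univ]
    _ = eLpNorm (fun _ => L) p (volume.restrict A) := (eLpNorm_const L hp0 hrestr).symm
    _ ≤ eLpNorm v p (volume.restrict A) := by
        apply eLpNorm_mono_ae
        filter_upwards [ae_restrict_mem hAmeas] with x hx
        rw [Real.norm_eq_abs, Real.norm_eq_abs, abs_of_nonneg hL]
        exact le_trans (hv x hx.1 hx.2) (le_abs_self _)

theorem intermediate_lower_bound_memory
    (N : ℕ) (α β : ℝ)
    (hα : 0 < α ∧ α < 1) (hβ : 0 < β ∧ β ≤ 1) (hN : 4 * β < (N : ℝ))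
    (G : EuclideanSpace ℝ (Fin N) → ℝ)
    (hGmeas : Measurable G) (hGnonneg : ∀ ξ, 0 ≤ G ξ)
    (c₁ c₂ : ℝ) (hc₁ : 0 < c₁) (hc₂ : 0 < c₂)
    (hGin : ∀ ξ : EuclideanSpace ℝ (Fin N), 0 < ‖ξ‖ → ‖ξ‖ ≤ 1 →
      c₁ * ‖ξ‖ ^ (4 * β - (N : ℝ)) ≤ G ξ ∧ G ξ ≤ c₂ * ‖ξ‖ ^ (4 * β - (N : ℝ)))
    (hGout : ∀ ξ : EuclideanSpace ℝ (Fin N), 1 ≤ ‖ξ‖ →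
      c₁ * ‖ξ‖ ^ (-((N : ℝ) + 2 * β)) ≤ G ξ ∧ G ξ ≤ c₂ * ‖ξ‖ ^ (-((N : ℝ) + 2 * β)))
    (Y : EuclideanSpace ℝ (Fin N) → ℝ → ℝ)
    (hY : ∀ x t, Y x t = t ^ (α - 1 - α * (N : ℝ) / (2 * β)) * G ((t ^ (-(α / (2 * β)))) • x))
    (γ : ℝ) (f : EuclideanSpace ℝ (Fin N) → ℝ → ℝ)
    (hf : ∀ x t, f x t =
      (1 + t) ^ (-γ) * Set.indicator (Metric.ball (0 : EuclideanSpace ℝ (Fin N)) 1) (fun _ => (1:ℝ)) x)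
    (u : EuclideanSpace ℝ (Fin N) → ℝ → ℝ)
    (hu : ∀ x t, u x t = ∫ s in Set.Ioc (0:ℝ) t, ∫ y, Y (x - y) (t - s) * f y s)
    (p : ℝ≥0∞) (hp : 1 ≤ p)
    (ν μ : ℝ) (hν : 0 < ν) (hνμ : ν < μ)
    (g : ℝ → ℝ) (hgpos : ∀ t : ℝ, 0 < t → 0 < g t)
    (hginf : Tendsto g atTop atTop)
    (hgo : Tendsto (fun t => g t / t ^ (α / (2 * β))) atTop (nhds 0)) :
    ∃ c : ℝ, 0 < c ∧ ∃ t₀ : ℝ, 2 ≤ t₀ ∧ ∀ t : ℝ, t₀ ≤ t →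
      (γ < 1 →
        ENNReal.ofReal (c * g t ^ (4 * β - (N : ℝ) * (1 - 1 / p.toReal)) * t ^ (-(γ + α))) ≤
          eLpNorm (fun x => u x t) p (volume.restrict {x : EuclideanSpace ℝ (Fin N) | ν ≤ ‖x‖ / g t ∧ ‖x‖ / g t ≤ μ})) ∧
      (γ = 1 →
        ENNReal.ofReal (c * g t ^ (4 * β - (N : ℝ) * (1 - 1 / p.toReal)) *
            (t ^ (-(1 + α)) * Real.log t)) ≤
          eLpNorm (fun x => u x t) p (volume.restrict {x : EuclideanSpace ℝ (Fin N) | ν ≤ ‖x‖ / g t ∧ ‖x‖ / g t ≤ μ})) ∧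
      (1 < γ →
        ENNReal.ofReal (c * g t ^ (4 * β - (N : ℝ) * (1 - 1 / p.toReal)) * t ^ (-(1 + α))) ≤
          eLpNorm (fun x => u x t) p (volume.restrict {x : EuclideanSpace ℝ (Fin N) | ν ≤ ‖x‖ / g t ∧ ‖x‖ / g t ≤ μ})) := by
  
  obtain ⟨hα0, hα1⟩ := hα
  obtain ⟨hβ0, hβ1⟩ := hβ
  have h2β : (0:ℝ) < 2 * β := by linarith
  have hNpos : (0:ℝ) < (N:ℝ) := by linarith
  have hN0 : 0 < N := by exact_mod_cast hNpos
  have hμ0 : 0 < μ := lt_trans hν hνμ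
  set q := α / (2 * β) with hqdef
  have hqpos : 0 < q := div_pos hα0 h2β
  have hεpos : (0:ℝ) < (1/2 : ℝ) ^ q / (μ + 1) := by positivity
  have hev : ∀ᶠ t : ℝ in atTop, (max 1 (2 / ν) ≤ g t ∧
      g t / t ^ q < (1/2 : ℝ) ^ q / (μ + 1)) ∧ (4:ℝ) ≤ t :=
    ((hginf.eventually_ge_atTop _).and (hgo.eventually (gt_mem_nhds hεpos))).and
      (eventually_ge_atTop 4)
  obtain ⟨T, hT⟩ := eventually_atTop.1 hev
  set t₀ : ℝ := max T 4 with ht₀def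
  have ht₀2 : (2:ℝ) ≤ t₀ := le_trans (by norm_num) (le_max_right _ _)
  -- facts valid for every t ≥ t₀
  have hfacts : ∀ t : ℝ, t₀ ≤ t → (4:ℝ) ≤ t ∧ 0 < g t ∧ 1 ≤ g t ∧ 2 ≤ ν * g t ∧
      (μ + 1) * g t ≤ (t / 2) ^ q := by
    intro t ht
    obtain ⟨⟨hg1, hg2⟩, ht4⟩ := hT t (le_trans (le_max_left _ _) ht)
    have htpos : (0:ℝ) < t := by linarith
    have hgt0 : 0 < g t := hgpos t htpos
    have hg1' : 1 ≤ g t := le_trans (le_max_left _ _) hg1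
    have hg2' : 2 / ν ≤ g t := le_trans (le_max_right _ _) hg1
    have hνg : 2 ≤ ν * g t := by
      rw [div_le_iff₀ hν] at hg2'
      linarith [hg2']
    have htq : 0 < t ^ q := Real.rpow_pos_of_pos htpos q
    have hlt : g t < ((1/2 : ℝ) ^ q / (μ + 1)) * t ^ q := by
      rw [div_lt_iff₀ htq] at hg2
      linarith
    have h12 : ((1/2 : ℝ) ^ q) * t ^ q = (t/2) ^ q := by
      rw [← Real.mul_rpow (by norm_num) htpos.le]
      congr 1
      ring
    have hμ1 : (0:ℝ) < μ + 1 := by linarith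
    have h13 := mul_lt_mul_of_pos_left hlt hμ1
    have h14 : (μ+1) * (((1/2:ℝ) ^ q / (μ+1)) * t ^ q) = (t/2) ^ q := by
      rw [← h12]
      field_simp
    refine ⟨ht4, hgt0, hg1', hνg, le_of_lt ?_⟩
    rw [← h14]
    exact h13
  -- shared constants
  set κ₁ : ℝ := (volume (Metric.ball (0 : EuclideanSpace ℝ (Fin N)) 1)).toReal with hκ₁def
  have hκpos : 0 < κ₁ :=
    ENNReal.toReal_pos (Metric.measure_ball_pos volume 0 one_pos).ne' measure_ball_lt_top.ne
  have hμν : 0 < μ ^ N - ν ^ N := by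
    have := pow_lt_pow_left₀ hνμ hν.le hN0.ne'
    linarith
  have hip : (0:ℝ) ≤ 1 / p.toReal := by positivity
  -- the generic reduction for one value of t
  have hkey : ∀ t : ℝ, t₀ ≤ t → ∀ jl : ℝ, 0 ≤ jl →
      jl ≤ (∫ s in Set.Ioc (0:ℝ) (t/2), (1 + s) ^ (-γ)) →
      ENNReal.ofReal ((κ₁ * (c₁ * (μ+1) ^ (4*β - (N:ℝ))) * jl *
            ((μ ^ N - ν ^ N) * κ₁) ^ (1/p.toReal)) *
          g t ^ (4 * β - (N : ℝ) * (1 - 1 / p.toReal)) * t ^ (-1-α)) ≤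
        eLpNorm (fun x => u x t) p
          (volume.restrict {x : EuclideanSpace ℝ (Fin N) | ν ≤ ‖x‖ / g t ∧ ‖x‖ / g t ≤ μ}) := by
    intro t ht jl hjl0 hjl
    obtain ⟨ht4, hg0, hg1, hνg, hgR⟩ := hfacts t ht
    have htpos : (0:ℝ) < t := by linarith
    have hset : {x : EuclideanSpace ℝ (Fin N) | ν ≤ ‖x‖ / g t ∧ ‖x‖ / g t ≤ μ}
        = {x : EuclideanSpace ℝ (Fin N) | ν * g t ≤ ‖x‖ ∧ ‖x‖ ≤ μ * g t} := by
      ext z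
      simp only [Set.mem_setOf_eq]
      rw [le_div_iff₀ hg0, div_le_iff₀ hg0]
    rw [hset]
    set L : ℝ := κ₁ * (c₁ * ((μ + 1) * g t) ^ (4 * β - (N:ℝ)) * t ^ (-1 - α)) * jl with hLdef
    have hΛpos : 0 < c₁ * ((μ + 1) * g t) ^ (4 * β - (N:ℝ)) * t ^ (-1 - α) := by
      have : (0:ℝ) < (μ + 1) * g t := by nlinarith
      positivity
    have hL0 : 0 ≤ L := mul_nonneg (mul_nonneg hκpos.le hΛpos.le) hjl0
    have hv : ∀ x : EuclideanSpace ℝ (Fin N), ν * g t ≤ ‖x‖ → ‖x‖ ≤ μ * g t → L ≤ u x t := by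
      intro x hx1 hx2
      have hk := key_pointwise hα0 hα1 hβ0 hN hGmeas hGnonneg hc₁ hc₂ hGin hGout hY hf hu
        hν hνμ t (g t) ht4 hg1 hνg hgR x hx1 hx2
      refine le_trans ?_ hk
      exact mul_le_mul_of_nonneg_left hjl (mul_nonneg hκpos.le hΛpos.le)
    have help := elp_low hN0 p hp (fun x => u x t) (ν * g t) (μ * g t) L
      (by positivity) (by nlinarith) hL0 hv
    refine le_trans (le_of_eq ?_) help
    congr 1
    -- real algebra
    have h1 : ((μ * g t) ^ N - (ν * g t) ^ N) * κ₁ = ((μ ^ N - ν ^ N) * κ₁) * g t ^ N := by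
      rw [mul_pow, mul_pow]; ring
    have h2 : (((μ ^ N - ν ^ N) * κ₁) * g t ^ N) ^ (1/p.toReal)
        = ((μ ^ N - ν ^ N) * κ₁) ^ (1/p.toReal) * (g t ^ N) ^ (1/p.toReal) :=
      Real.mul_rpow (mul_nonneg hμν.le hκpos.le) (pow_nonneg hg0.le N)
    have h3 : ((g t : ℝ) ^ N) ^ (1/p.toReal) = g t ^ ((N:ℝ) * (1/p.toReal)) := by
      rw [← Real.rpow_natCast (g t) N, ← Real.rpow_mul hg0.le]
    have h4 : ((μ + 1) * g t) ^ (4 * β - (N:ℝ))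
        = (μ + 1) ^ (4 * β - (N:ℝ)) * g t ^ (4 * β - (N:ℝ)) :=
      Real.mul_rpow (by linarith) hg0.le
    have h5 : g t ^ (4 * β - (N:ℝ)) * g t ^ ((N:ℝ) * (1/p.toReal))
        = g t ^ (4 * β - (N : ℝ) * (1 - 1 / p.toReal)) := by
      rw [← Real.rpow_add hg0]
      congr 1
      ring
    rw [h1, h2, h3, hLdef, h4, ← h5]
    ring
  -- now split on γ
  rcases lt_trichotomy γ 1 with hγ | hγ | hγ
  · -- γ < 1
    have hminpos : (0:ℝ) < min 1 (4 ^ γ) :=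
      lt_min one_pos (Real.rpow_pos_of_pos (by norm_num) _)
    refine ⟨(κ₁ * (c₁ * (μ+1) ^ (4*β - (N:ℝ))) * (min 1 (4 ^ γ) / 4) *
        ((μ ^ N - ν ^ N) * κ₁) ^ (1/p.toReal)), by positivity, t₀, ht₀2, fun t ht => ?_⟩
    refine ⟨fun _ => ?_, fun h => absurd h (by linarith), fun h => absurd h (by linarith)⟩
    obtain ⟨ht4, hg0, hg1, hνg, hgR⟩ := hfacts t ht
    have htpos : (0:ℝ) < t := by linarith
    have hJ := Jlow_lt hγ (by linarith : (2:ℝ) ≤ t)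
    have hkey' := hkey t ht (min 1 (4 ^ γ) * t ^ (-γ) * (t / 4))
      (by positivity) hJ
    refine le_trans (le_of_eq ?_) hkey'
    congr 1
    have ht3 : t ^ (-1-α) * (t ^ (-γ) * t) = t ^ (-(γ + α)) := by
      nth_rewrite 3 [show t = t ^ (1:ℝ) from (Real.rpow_one t).symm]
      rw [← Real.rpow_add htpos, ← Real.rpow_add htpos]
      congr 1
      ring
    calc (κ₁ * (c₁ * (μ+1) ^ (4*β - (N:ℝ))) * (min 1 (4 ^ γ) / 4) *
          ((μ ^ N - ν ^ N) * κ₁) ^ (1/p.toReal)) *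
          g t ^ (4 * β - (N : ℝ) * (1 - 1 / p.toReal)) * t ^ (-(γ + α))
        = (κ₁ * (c₁ * (μ+1) ^ (4*β - (N:ℝ))) * (min 1 (4 ^ γ) / 4) *
          ((μ ^ N - ν ^ N) * κ₁) ^ (1/p.toReal)) *
          g t ^ (4 * β - (N : ℝ) * (1 - 1 / p.toReal)) * (t ^ (-1-α) * (t ^ (-γ) * t)) := by
          rw [ht3]
      _ = (κ₁ * (c₁ * (μ+1) ^ (4*β - (N:ℝ))) * (min 1 (4 ^ γ) * t ^ (-γ) * (t / 4)) *
          ((μ ^ N - ν ^ N) * κ₁) ^ (1/p.toReal)) *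
          g t ^ (4 * β - (N : ℝ) * (1 - 1 / p.toReal)) * t ^ (-1-α) := by ring
  · -- γ = 1
    subst hγ
    refine ⟨(κ₁ * (c₁ * (μ+1) ^ (4*β - (N:ℝ))) * (1/4) *
        ((μ ^ N - ν ^ N) * κ₁) ^ (1/p.toReal)), by positivity, t₀, ht₀2, fun t ht => ?_⟩
    refine ⟨fun h => absurd h (by linarith), fun _ => ?_, fun h => absurd h (by linarith)⟩
    obtain ⟨ht4, hg0, hg1, hνg, hgR⟩ := hfacts t ht
    have htpos : (0:ℝ) < t := by linarith
    have hlog : 0 ≤ Real.log t := Real.log_nonneg (by linarith)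
    have hJ := Jlow_eq (by linarith : (4:ℝ) ≤ t)
    have hkey' := hkey t ht ((1/4) * Real.log t) (by positivity) hJ
    refine le_trans (le_of_eq ?_) hkey'
    congr 1
    have ht3 : t ^ (-(1+α)) = t ^ (-1-α) := by
      congr 1
      ring
    rw [ht3]
    ring
  · -- 1 < γ
    refine ⟨(κ₁ * (c₁ * (μ+1) ^ (4*β - (N:ℝ))) * (2:ℝ) ^ (-γ) *
        ((μ ^ N - ν ^ N) * κ₁) ^ (1/p.toReal)), by positivity, t₀, ht₀2, fun t ht => ?_⟩
    refine ⟨fun h => absurd h (by linarith), fun h => absurd h (by linarith), fun _ => ?_⟩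
    obtain ⟨ht4, hg0, hg1, hνg, hgR⟩ := hfacts t ht
    have htpos : (0:ℝ) < t := by linarith
    have hJ := Jlow_gt hγ (by linarith : (2:ℝ) ≤ t)
    have hkey' := hkey t ht ((2:ℝ) ^ (-γ)) (by positivity) hJ
    refine le_trans (le_of_eq ?_) hkey'
    congr 1
    have ht3 : t ^ (-(1+α)) = t ^ (-1-α) := by
      congr 1
      ring
    rw [ht3]
end
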